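/- arXiv:1206.4165 — 2 statements merged into one kernel-verified Lean document; each statement's English description precedes it below -/
import Mathlib

section
/- Let K be a differential field of characteristic 0 and A ∈ M_n(K((∂^{-1}))) a matrix pseudodifferential operator with adjoint A*. If det(A) = 0 then det(A*) = 0, and if det(A) ≠ 0 then det(A*) = (-1)^{d(A)} det(A), where d(A) is the degree of det(A). -/
/-- The ring of differential operators K[∂] over a differential field (K, d),
characterized abstractly. -/
structure DiffOpRing (K : Type) [Field K] (d : K → K) (R : Type) [Ring R] where
  ι : K →+* R
  dop : R
  comm : ∀ a : K, dop * ι a = ι a * dop + ι (d a)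
  repr : ∀ r : R, ∃! c : ℕ →₀ K, r = c.sum fun i a => ι a * dop ^ i

/-- The coefficients of a differential operator. -/
noncomputable def DiffOpRing.coeff {K : Type} [Field K] {d : K → K} {R : Type} [Ring R]
    (S : DiffOpRing K d R) (r : R) : ℕ →₀ K := (S.repr r).choose

/-- The order of a differential operator. -/
noncomputable def DiffOpRing.ord {K : Type} [Field K] {d : K → K} {R : Type} [Ring R]
    (S : DiffOpRing K d R) (r : R) : ℕ := (S.coeff r).support.sup id

/-- The leading coefficient of a differential operator. -/
noncomputable def DiffOpRing.lead {K : Type} [Field K] {d : K → K} {R : Type} [Ring R]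
    (S : DiffOpRing K d R) (r : R) : K := (S.coeff r) (S.ord r)

/-- The formal adjoint of a differential operator: (Σ a_i ∂^i)* = Σ (-∂)^i ∘ a_i. -/
noncomputable def DiffOpRing.adj {K : Type} [Field K] {d : K → K} {R : Type} [Ring R]
    (S : DiffOpRing K d R) (r : R) : R :=
  (S.coeff r).sum fun i a => (-S.dop) ^ i * S.ι a

/-- The adjoint of a matrix differential operator: (A*)_{ij} = (A_{ji})*. -/
noncomputable def adjM {K : Type} [Field K] {d : K → K} {R : Type} [Ring R]
    (S : DiffOpRing K d R) {n : ℕ} (A : Matrix (Fin n) (Fin n) R) :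
    Matrix (Fin n) (Fin n) R :=
  Matrix.of fun i j => S.adj (A j i)

/-- A matrix differential operator is non-degenerate (non-zero Dieudonné determinant)
iff it has trivial right kernel over K[∂]. -/
def Nondeg {n : ℕ} {R : Type} [Ring R] (A : Matrix (Fin n) (Fin n) R) : Prop :=
  ∀ X : Fin n → R, A.mulVec X = 0 → X = 0

namespace DiffOpRing
variable {K : Type} [Field K] {d : K → K} {R : Type} [Ring R] (S : DiffOpRing K d R)

noncomputable def toR (c : ℕ →₀ K) : R := c.sum fun i a => S.ι a * S.dop ^ i

lemma toR_coeff (r : R) : S.toR (S.coeff r) = r := ((S.repr r).choose_spec.1).symm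

lemma coeff_unique {c : ℕ →₀ K} {r : R} (h : S.toR c = r) : S.coeff r = c :=
  ((S.repr r).choose_spec.2 c h.symm).symm

lemma toR_zero : S.toR 0 = 0 := Finsupp.sum_zero_index

lemma toR_add (c c' : ℕ →₀ K) : S.toR (c + c') = S.toR c + S.toR c' :=
  Finsupp.sum_add_index' (fun i => by simp) (fun i b₁ b₂ => by rw [map_add, add_mul])

lemma toR_single (i : ℕ) (a : K) : S.toR (Finsupp.single i a) = S.ι a * S.dop ^ i :=
  Finsupp.sum_single_index (by simp)

lemma coeff_toR (c : ℕ →₀ K) : S.coeff (S.toR c) = c := S.coeff_unique rfl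

lemma coeff_zero : S.coeff 0 = 0 := S.coeff_unique S.toR_zero

lemma coeff_add (r s : R) : S.coeff (r + s) = S.coeff r + S.coeff s :=
  S.coeff_unique (by rw [toR_add, toR_coeff, toR_coeff])

lemma coeff_mono (i : ℕ) (a : K) : S.coeff (S.ι a * S.dop ^ i) = Finsupp.single i a :=
  S.coeff_unique (S.toR_single i a)

noncomputable def coeffHom : R →+ (ℕ →₀ K) where
  toFun := S.coeff
  map_zero' := S.coeff_zero
  map_add' := S.coeff_add

lemma coeff_neg (r : R) : S.coeff (-r) = - S.coeff r := map_neg S.coeffHom r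

lemma coeff_sub (r s : R) : S.coeff (r - s) = S.coeff r - S.coeff s := map_sub S.coeffHom r s

lemma eq_zero_of_coeff (r : R) (h : S.coeff r = 0) : r = 0 := by
  have := S.toR_coeff r; rw [h, toR_zero] at this; exact this.symm

include S in
lemma one_ne_zero' : (1 : R) ≠ 0 := by
  intro h
  have h1 : S.toR (Finsupp.single 0 1) = 0 := by
    rw [toR_single]; simp [h]
  have := S.coeff_unique h1
  rw [S.coeff_zero] at this
  exact (one_ne_zero : (1:K) ≠ 0) (by simpa using Finsupp.single_eq_zero.mp this.symm)

lemma iota_ne_zero {a : K} (ha : a ≠ 0) : S.ι a ≠ 0 := by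
  intro h
  apply S.one_ne_zero'
  have : S.ι (a * a⁻¹) = 0 := by rw [map_mul, h, zero_mul]
  rwa [mul_inv_cancel₀ ha, map_one] at this

include S in
lemma d_zero : d 0 = 0 := by
  have := S.comm 0
  rw [map_zero, mul_zero, zero_mul, zero_add] at this
  by_contra h
  exact S.iota_ne_zero h this.symm

lemma coeff_ord_ne_zero {r : R} (h : r ≠ 0) : S.coeff r (S.ord r) ≠ 0 := by
  have hne : (S.coeff r).support.Nonempty := by
    rw [Finsupp.support_nonempty_iff]
    intro hc; exact h (S.eq_zero_of_coeff r hc)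
  obtain ⟨i, hi, hsup⟩ := Finset.exists_mem_eq_sup _ hne id
  rw [ord, hsup]
  exact Finsupp.mem_support_iff.mp hi

lemma lead_ne_zero {r : R} (h : r ≠ 0) : S.lead r ≠ 0 := S.coeff_ord_ne_zero h

lemma coeff_eq_zero_of_ord_lt {r : R} {k : ℕ} (h : S.ord r < k) : S.coeff r k = 0 := by
  by_contra hc
  exact absurd (Finset.le_sup (f := id) (Finsupp.mem_support_iff.mpr hc)) (not_le.mpr h)

lemma ord_le {r : R} {n : ℕ} (h : ∀ k, n < k → S.coeff r k = 0) : S.ord r ≤ n := by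
  apply Finset.sup_le
  intro i hi
  by_contra hc
  exact Finsupp.mem_support_iff.mp hi (h i (not_le.mp hc))

lemma ord_lt {r : R} {n : ℕ} (h : ∀ k, n ≤ k → S.coeff r k = 0) (hr : r ≠ 0) : S.ord r < n := by
  by_contra hc
  exact S.coeff_ord_ne_zero hr (h _ (not_lt.mp hc))

lemma eq_ord_lead {r : R} {n : ℕ} (hc : S.coeff r n ≠ 0) (hb : ∀ k, n < k → S.coeff r k = 0) :
    S.ord r = n ∧ S.lead r = S.coeff r n := by
  have h1 : S.ord r ≤ n := S.ord_le hb
  have h2 : n ≤ S.ord r := Finset.le_sup (f := id) (Finsupp.mem_support_iff.mpr hc)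
  have : S.ord r = n := le_antisymm h1 h2
  exact ⟨this, by rw [lead, this]⟩

lemma ord_mono {i : ℕ} {a : K} (ha : a ≠ 0) :
    S.ord (S.ι a * S.dop ^ i) = i ∧ S.lead (S.ι a * S.dop ^ i) = a := by
  have h := S.eq_ord_lead (n := i) (r := S.ι a * S.dop ^ i)
    (by rw [coeff_mono]; simpa using ha)
    (by intro k hk; rw [coeff_mono]; exact Finsupp.single_eq_of_ne (by omega))
  refine ⟨h.1, ?_⟩
  rw [h.2, coeff_mono, Finsupp.single_eq_same]

lemma mono_ne_zero {i : ℕ} {a : K} (ha : a ≠ 0) : S.ι a * S.dop ^ i ≠ 0 := by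
  intro h
  have := S.coeff_mono i a
  rw [h, coeff_zero] at this
  exact ha (by simpa using (Finsupp.single_eq_zero.mp this.symm))

lemma split {r : R} (hr : r ≠ 0) :
    ∃ r', r = S.ι (S.lead r) * S.dop ^ (S.ord r) + r' ∧ ∀ k, S.ord r ≤ k → S.coeff r' k = 0 := by
  refine ⟨r - S.ι (S.lead r) * S.dop ^ (S.ord r), by abel, ?_⟩
  intro k hk
  rw [coeff_sub, Finsupp.sub_apply, coeff_mono]
  rcases eq_or_lt_of_le hk with h | h
  · rw [← h, Finsupp.single_eq_same, lead]; ring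
  · rw [S.coeff_eq_zero_of_ord_lt h, Finsupp.single_eq_of_ne (by omega)]; ring

lemma mono_mul (i : ℕ) : ∀ (a b : K) (j : ℕ), ∃ t : R,
    S.ι a * S.dop ^ i * (S.ι b * S.dop ^ j) = S.ι (a * b) * S.dop ^ (i + j) + t ∧
    ∀ k, i + j ≤ k → S.coeff t k = 0 := by
  induction i with
  | zero =>
    intro a b j
    refine ⟨0, ?_, by simp [coeff_zero]⟩
    rw [pow_zero, mul_one, ← mul_assoc, ← map_mul, zero_add, add_zero]
  | succ i IH =>
    intro a b j
    have e1 : S.ι a * S.dop ^ (i + 1) * (S.ι b * S.dop ^ j) =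
        S.ι a * S.dop ^ i * (S.ι b * S.dop ^ (j + 1)) +
        S.ι a * S.dop ^ i * (S.ι (d b) * S.dop ^ j) := by
      rw [pow_succ, ← mul_add]
      rw [show S.ι b * S.dop ^ (j+1) + S.ι (d b) * S.dop ^ j
            = (S.ι b * S.dop + S.ι (d b)) * S.dop ^ j by
          rw [add_mul, pow_succ', mul_assoc]]
      rw [← S.comm b]
      noncomm_ring
    obtain ⟨t₁, ht₁, hb₁⟩ := IH a b (j + 1)
    obtain ⟨t₂, ht₂, hb₂⟩ := IH a (d b) j
    refine ⟨t₁ + (S.ι (a * d b) * S.dop ^ (i + j) + t₂), ?_, ?_⟩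
    · rw [e1, ht₁, ht₂]
      rw [show i + (j+1) = i + 1 + j by omega]
      abel
    · intro k hk
      rw [coeff_add, coeff_add, Finsupp.add_apply, Finsupp.add_apply, coeff_mono]
      rw [hb₁ k (by omega), hb₂ k (by omega), Finsupp.single_eq_of_ne (by omega)]
      simp

lemma mul_bd : ∀ N : ℕ, ∀ r s : R, r ≠ 0 → s ≠ 0 → S.ord r + S.ord s ≤ N →
    (∀ k, S.ord r + S.ord s < k → S.coeff (r * s) k = 0) ∧
    S.coeff (r * s) (S.ord r + S.ord s) = S.lead r * S.lead s := by
  intro N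
  induction N using Nat.strong_induction_on with
  | _ N IH =>
    intro r s hr hs hN
    set n := S.ord r with hn
    set m := S.ord s with hm
    obtain ⟨r', hr', hbr'⟩ := S.split hr
    obtain ⟨s', hs', hbs'⟩ := S.split hs
    obtain ⟨t, ht, hbt⟩ := S.mono_mul n (S.lead r) (S.lead s) m
    have key : r * s = (S.ι (S.lead r * S.lead s) * S.dop ^ (n + m) + t) +
        (S.ι (S.lead r) * S.dop ^ n) * s' + r' * s := by
      rw [← ht, hr', add_mul]
      nth_rewrite 1 [hs']
      rw [mul_add, ← hr']
    -- bound for the middle term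
    have hmid : ∀ k, n + m ≤ k → S.coeff ((S.ι (S.lead r) * S.dop ^ n) * s') k = 0 := by
      intro k hk
      by_cases h0 : s' = 0
      · rw [h0, mul_zero, coeff_zero]; rfl
      · have hos' : S.ord s' < m := S.ord_lt hbs' h0
        have hmono := S.mono_ne_zero (i := n) (S.lead_ne_zero hr)
        have hord := (S.ord_mono (i := n) (S.lead_ne_zero hr)).1
        have := (IH (S.ord (S.ι (S.lead r) * S.dop ^ n) + S.ord s')
            (by rw [hord]; omega) _ _ hmono h0 le_rfl).1 k (by rw [hord]; omega)
        exact this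
    have hlast : ∀ k, n + m ≤ k → S.coeff (r' * s) k = 0 := by
      intro k hk
      by_cases h0 : r' = 0
      · rw [h0, zero_mul, coeff_zero]; rfl
      · have hor' : S.ord r' < n := S.ord_lt hbr' h0
        have := (IH (S.ord r' + S.ord s) (by omega) _ _ h0 hs le_rfl).1 k (by omega)
        exact this
    have hcoeff : ∀ k, n + m ≤ k → S.coeff (r * s) k
        = Finsupp.single (n + m) (S.lead r * S.lead s) k := by
      intro k hk
      rw [key, coeff_add, coeff_add, coeff_add, Finsupp.add_apply, Finsupp.add_apply,
        Finsupp.add_apply, coeff_mono, hmid k hk, hlast k hk, hbt k hk]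
      simp
    constructor
    · intro k hk
      rw [hcoeff k (by omega), Finsupp.single_eq_of_ne (by omega)]
    · rw [hcoeff (n + m) le_rfl, Finsupp.single_eq_same]

lemma mul_facts {r s : R} (hr : r ≠ 0) (hs : s ≠ 0) :
    r * s ≠ 0 ∧ S.ord (r * s) = S.ord r + S.ord s ∧ S.lead (r * s) = S.lead r * S.lead s := by
  obtain ⟨hb, hc⟩ := S.mul_bd (S.ord r + S.ord s) r s hr hs le_rfl
  have hcn : S.coeff (r * s) (S.ord r + S.ord s) ≠ 0 := by
    rw [hc]; exact mul_ne_zero (S.lead_ne_zero hr) (S.lead_ne_zero hs)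
  have h := S.eq_ord_lead hcn hb
  refine ⟨fun h0 => hcn (by rw [h0, coeff_zero]; rfl), h.1, by rw [h.2, hc]⟩

include S in
lemma mul_ne_zero' {r s : R} (hr : r ≠ 0) (hs : s ≠ 0) : r * s ≠ 0 := (S.mul_facts hr hs).1

lemma ord_mul {r s : R} (hr : r ≠ 0) (hs : s ≠ 0) : S.ord (r * s) = S.ord r + S.ord s :=
  (S.mul_facts hr hs).2.1

lemma lead_mul {r s : R} (hr : r ≠ 0) (hs : s ≠ 0) : S.lead (r * s) = S.lead r * S.lead s :=
  (S.mul_facts hr hs).2.2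

include S in
lemma divL {b : R} (hb : b ≠ 0) : ∀ a : R, ∃ q r : R,
    a = q * b + r ∧ (r = 0 ∨ S.ord r < S.ord b) := by
  suffices h : ∀ N : ℕ, ∀ a : R, S.ord a ≤ N → ∃ q r : R,
      a = q * b + r ∧ (r = 0 ∨ S.ord r < S.ord b) by
    intro a; exact h (S.ord a) a le_rfl
  intro N
  induction N using Nat.strong_induction_on with
  | _ N IH =>
    intro a hN
    by_cases ha : a = 0
    · exact ⟨0, 0, by rw [ha, zero_mul, add_zero], Or.inl rfl⟩
    by_cases hlt : S.ord a < S.ord b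
    · exact ⟨0, a, by rw [zero_mul, zero_add], Or.inr hlt⟩
    push_neg at hlt
    set q0 : R := S.ι (S.lead a * (S.lead b)⁻¹) * S.dop ^ (S.ord a - S.ord b) with hq0
    have hc0 : S.lead a * (S.lead b)⁻¹ ≠ 0 :=
      mul_ne_zero (S.lead_ne_zero ha) (inv_ne_zero (S.lead_ne_zero hb))
    have hq0ne : q0 ≠ 0 := S.mono_ne_zero hc0
    have hoq : S.ord q0 = S.ord a - S.ord b := (S.ord_mono hc0).1
    have hlq : S.lead q0 = S.lead a * (S.lead b)⁻¹ := (S.ord_mono hc0).2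
    have hoqb : S.ord (q0 * b) = S.ord a := by
      rw [S.ord_mul hq0ne hb, hoq]; omega
    have hlqb : S.lead (q0 * b) = S.lead a := by
      rw [S.lead_mul hq0ne hb, hlq, mul_assoc, inv_mul_cancel₀ (S.lead_ne_zero hb), mul_one]
    have hbd : ∀ k, S.ord a ≤ k → S.coeff (a - q0 * b) k = 0 := by
      intro k hk
      rw [coeff_sub, Finsupp.sub_apply]
      rcases eq_or_lt_of_le hk with h | h
      · rw [← h]
        have e1 : S.coeff a (S.ord a) = S.lead a := rfl
        have e2 : S.coeff (q0 * b) (S.ord a) = S.lead a := by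
          rw [← hlqb, lead, hoqb]
        rw [e1, e2, sub_self]
      · rw [S.coeff_eq_zero_of_ord_lt h, S.coeff_eq_zero_of_ord_lt (by omega), sub_self]
    by_cases h0 : a - q0 * b = 0
    · exact ⟨q0, 0, by rw [add_zero, ← sub_eq_zero, h0], Or.inl rfl⟩
    · have hord' : S.ord (a - q0 * b) < S.ord a := S.ord_lt hbd h0
      obtain ⟨q', r', he, hr'⟩ := IH (S.ord (a - q0 * b)) (by omega) (a - q0 * b) le_rfl
      exact ⟨q0 + q', r', by rw [add_mul]; rw [sub_eq_iff_eq_add] at he; rw [he]; abel, hr'⟩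

include S in
lemma divR {b : R} (hb : b ≠ 0) : ∀ a : R, ∃ q r : R,
    a = b * q + r ∧ (r = 0 ∨ S.ord r < S.ord b) := by
  suffices h : ∀ N : ℕ, ∀ a : R, S.ord a ≤ N → ∃ q r : R,
      a = b * q + r ∧ (r = 0 ∨ S.ord r < S.ord b) by
    intro a; exact h (S.ord a) a le_rfl
  intro N
  induction N using Nat.strong_induction_on with
  | _ N IH =>
    intro a hN
    by_cases ha : a = 0
    · exact ⟨0, 0, by rw [ha, mul_zero, add_zero], Or.inl rfl⟩
    by_cases hlt : S.ord a < S.ord b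
    · exact ⟨0, a, by rw [mul_zero, zero_add], Or.inr hlt⟩
    push_neg at hlt
    set q0 : R := S.ι ((S.lead b)⁻¹ * S.lead a) * S.dop ^ (S.ord a - S.ord b) with hq0
    have hc0 : (S.lead b)⁻¹ * S.lead a ≠ 0 :=
      mul_ne_zero (inv_ne_zero (S.lead_ne_zero hb)) (S.lead_ne_zero ha)
    have hq0ne : q0 ≠ 0 := S.mono_ne_zero hc0
    have hoq : S.ord q0 = S.ord a - S.ord b := (S.ord_mono hc0).1
    have hlq : S.lead q0 = (S.lead b)⁻¹ * S.lead a := (S.ord_mono hc0).2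
    have hoqb : S.ord (b * q0) = S.ord a := by
      rw [S.ord_mul hb hq0ne, hoq]; omega
    have hlqb : S.lead (b * q0) = S.lead a := by
      rw [S.lead_mul hb hq0ne, hlq, ← mul_assoc, mul_inv_cancel₀ (S.lead_ne_zero hb), one_mul]
    have hbd : ∀ k, S.ord a ≤ k → S.coeff (a - b * q0) k = 0 := by
      intro k hk
      rw [coeff_sub, Finsupp.sub_apply]
      rcases eq_or_lt_of_le hk with h | h
      · rw [← h]
        have e1 : S.coeff a (S.ord a) = S.lead a := rfl
        have e2 : S.coeff (b * q0) (S.ord a) = S.lead a := by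
          rw [← hlqb, lead, hoqb]
        rw [e1, e2, sub_self]
      · rw [S.coeff_eq_zero_of_ord_lt h, S.coeff_eq_zero_of_ord_lt (by omega), sub_self]
    by_cases h0 : a - b * q0 = 0
    · exact ⟨q0, 0, by rw [add_zero, ← sub_eq_zero, h0], Or.inl rfl⟩
    · have hord' : S.ord (a - b * q0) < S.ord a := S.ord_lt hbd h0
      obtain ⟨q', r', he, hr'⟩ := IH (S.ord (a - b * q0)) (by omega) (a - b * q0) le_rfl
      exact ⟨q0 + q', r', by rw [mul_add]; rw [sub_eq_iff_eq_add] at he; rw [he]; abel, hr'⟩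

noncomputable def toAdj (c : ℕ →₀ K) : R := c.sum fun i a => (-S.dop) ^ i * S.ι a

lemma adj_def (r : R) : S.adj r = S.toAdj (S.coeff r) := rfl

lemma toAdj_zero : S.toAdj 0 = 0 := Finsupp.sum_zero_index

lemma toAdj_add (c c' : ℕ →₀ K) : S.toAdj (c + c') = S.toAdj c + S.toAdj c' :=
  Finsupp.sum_add_index' (fun i => by simp) (fun i b₁ b₂ => by rw [map_add, mul_add])

lemma adj_zero : S.adj 0 = 0 := by rw [adj_def, coeff_zero, toAdj_zero]

lemma adj_add (r s : R) : S.adj (r + s) = S.adj r + S.adj s := by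
  rw [adj_def, adj_def, adj_def, coeff_add, toAdj_add]

lemma adj_mono (i : ℕ) (a : K) : S.adj (S.ι a * S.dop ^ i) = (-S.dop) ^ i * S.ι a := by
  rw [adj_def, coeff_mono, toAdj]
  exact Finsupp.sum_single_index (by simp)

lemma adj_iota (a : K) : S.adj (S.ι a) = S.ι a := by
  have := S.adj_mono 0 a
  simpa using this

lemma adj_one : S.adj 1 = 1 := by
  have := S.adj_iota 1
  rwa [map_one] at this

lemma coeff_iota_mul (a : K) (y : R) :
    S.coeff (S.ι a * y) = Finsupp.mapRange (a * ·) (mul_zero a) (S.coeff y) := by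
  apply S.coeff_unique
  rw [toR, Finsupp.sum_mapRange_index (by simp)]
  conv_rhs => rw [← S.toR_coeff y, toR, Finsupp.mul_sum]
  apply Finsupp.sum_congr
  intro j _
  rw [← mul_assoc, ← map_mul]

lemma adj_iota_mul (a : K) (y : R) : S.adj (S.ι a * y) = S.adj y * S.ι a := by
  rw [adj_def, coeff_iota_mul, toAdj, Finsupp.sum_mapRange_index (by simp)]
  rw [adj_def, toAdj, Finsupp.sum_mul]
  apply Finsupp.sum_congr
  intro j _
  rw [mul_assoc, ← map_mul, mul_comm a]

lemma coeff_dop_mul (y : R) : S.coeff (S.dop * y) =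
    Finsupp.mapDomain Nat.succ (S.coeff y) + Finsupp.mapRange d S.d_zero (S.coeff y) := by
  apply S.coeff_unique
  rw [toR_add]
  rw [toR, Finsupp.sum_mapDomain_index (by simp) (fun b m₁ m₂ => by rw [map_add, add_mul])]
  rw [toR, Finsupp.sum_mapRange_index (by simp)]
  conv_rhs => rw [← S.toR_coeff y, toR, Finsupp.mul_sum]
  rw [← Finsupp.sum_add]
  apply Finsupp.sum_congr
  intro j _
  rw [← mul_assoc, S.comm, add_mul, Nat.succ_eq_add_one, pow_succ', mul_assoc]

lemma adj_dop_mul (y : R) : S.adj (S.dop * y) = S.adj y * (-S.dop) := by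
  rw [adj_def, coeff_dop_mul, toAdj_add]
  rw [toAdj, Finsupp.sum_mapDomain_index (by simp) (fun b m₁ m₂ => by rw [map_add, mul_add])]
  rw [toAdj, Finsupp.sum_mapRange_index (by simp)]
  rw [adj_def, toAdj, Finsupp.sum_mul]
  rw [← Finsupp.sum_add]
  apply Finsupp.sum_congr
  intro j _
  have hcb : (-S.dop) * S.ι (S.coeff y j) = S.ι (S.coeff y j) * (-S.dop) - S.ι (d (S.coeff y j)) := by
    have := S.comm (S.coeff y j)
    rw [neg_mul, this, mul_neg]
    abel
  rw [Nat.succ_eq_add_one, pow_succ, mul_assoc, hcb]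
  noncomm_ring

lemma adj_mono_mul (i : ℕ) : ∀ (a : K) (s : R),
    S.adj ((S.ι a * S.dop ^ i) * s) = S.adj s * ((-S.dop) ^ i * S.ι a) := by
  induction i with
  | zero =>
    intro a s
    rw [pow_zero, mul_one, pow_zero, one_mul, adj_iota_mul]
  | succ i IH =>
    intro a s
    have e : (S.ι a * S.dop ^ (i + 1)) * s = (S.ι a * S.dop ^ i) * (S.dop * s) := by
      rw [pow_succ]; noncomm_ring
    rw [e, IH a (S.dop * s), adj_dop_mul]
    rw [pow_succ']
    noncomm_ring

lemma adj_mul (r s : R) : S.adj (r * s) = S.adj s * S.adj r := by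
  have main : ∀ c : ℕ →₀ K, S.adj (S.toR c * s) = S.adj s * S.adj (S.toR c) := by
    intro c
    induction c using Finsupp.induction with
    | zero => rw [toR_zero, zero_mul, adj_zero, mul_zero]
    | single_add i a f hif ha IH =>
      rw [toR_add, add_mul, adj_add, adj_add, mul_add, toR_single, adj_mono_mul, adj_mono, IH]
  have := main (S.coeff r)
  rwa [S.toR_coeff r] at this

lemma adj_neg (r : R) : S.adj (-r) = - S.adj r := by
  have := S.adj_add r (-r)
  rw [add_neg_cancel, adj_zero] at this
  exact (neg_eq_of_add_eq_zero_right this.symm).symm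

lemma adj_dop : S.adj S.dop = -S.dop := by
  have := S.adj_mono 1 1
  rw [map_one, one_mul, pow_one, pow_one, mul_one] at this
  exact this

lemma adj_pow (x : R) (i : ℕ) : S.adj (x ^ i) = (S.adj x) ^ i := by
  induction i with
  | zero => rw [pow_zero, pow_zero, adj_one]
  | succ i IH => rw [pow_succ, adj_mul, IH, pow_succ']

lemma adj_adj (r : R) : S.adj (S.adj r) = r := by
  have main : ∀ c : ℕ →₀ K, S.adj (S.toAdj c) = S.toR c := by
    intro c
    induction c using Finsupp.induction with
    | zero => rw [toAdj_zero, adj_zero, toR_zero]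
    | single_add i a f hif ha IH =>
      rw [toAdj_add, adj_add, toR_add, IH]
      congr 1
      rw [toAdj, Finsupp.sum_single_index (by simp), toR_single]
      rw [adj_mul, adj_iota, adj_pow, adj_neg, adj_dop, neg_neg]
  have := main (S.coeff r)
  exact this.trans (S.toR_coeff r)

lemma adj_facts : ∀ N : ℕ, ∀ r : R, r ≠ 0 → S.ord r ≤ N →
    S.adj r ≠ 0 ∧ S.ord (S.adj r) = S.ord r ∧
    S.lead (S.adj r) = (-1 : K) ^ (S.ord r) * S.lead r := by
  intro N
  induction N using Nat.strong_induction_on with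
  | _ N IH =>
    intro r hr hN
    set n := S.ord r with hn
    obtain ⟨r', hr', hbr'⟩ := S.split hr
    -- adjoint of the leading monomial
    obtain ⟨t, ht, hbt⟩ := S.mono_mul n 1 (S.lead r) 0
    rw [map_one, one_mul, pow_zero, mul_one, one_mul, add_zero] at ht
    -- ht : S.dop ^ n * S.ι (S.lead r) = S.ι (S.lead r) * S.dop ^ n + t
    have hmono : S.adj (S.ι (S.lead r) * S.dop ^ n) =
        S.ι ((-1 : K) ^ n * S.lead r) * S.dop ^ n + S.ι ((-1 : K) ^ n) * t := by
      rw [adj_mono, neg_pow, show ((-1 : R) ^ n) = S.ι ((-1 : K) ^ n) by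
        rw [map_pow, map_neg, map_one], mul_assoc, ht, mul_add, ← mul_assoc, ← map_mul]
    have hcoeff : ∀ k, n ≤ k → S.coeff (S.adj r) k =
        Finsupp.single n ((-1 : K) ^ n * S.lead r) k := by
      intro k hk
      have e1 : S.adj r = S.adj (S.ι (S.lead r) * S.dop ^ n) + S.adj r' := by
        rw [← adj_add, ← hr']
      rw [e1, hmono, coeff_add, coeff_add, Finsupp.add_apply, Finsupp.add_apply, coeff_mono]
      have h2 : S.coeff (S.ι ((-1 : K) ^ n) * t) k = 0 := by
        rw [coeff_iota_mul, Finsupp.mapRange_apply, hbt k hk, mul_zero]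
      have h3 : S.coeff (S.adj r') k = 0 := by
        by_cases h0 : r' = 0
        · rw [h0, adj_zero, coeff_zero]; rfl
        · have hor' : S.ord r' < n := S.ord_lt hbr' h0
          have := IH (S.ord r') (by omega) r' h0 le_rfl
          exact S.coeff_eq_zero_of_ord_lt (by rw [this.2.1]; omega)
      rw [h2, h3, add_zero, add_zero]
    have hc0 : S.coeff (S.adj r) n ≠ 0 := by
      rw [hcoeff n le_rfl, Finsupp.single_eq_same]
      exact mul_ne_zero (pow_ne_zero _ (by norm_num)) (S.lead_ne_zero hr)
    have hb : ∀ k, n < k → S.coeff (S.adj r) k = 0 := by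
      intro k hk
      rw [hcoeff k (by omega), Finsupp.single_eq_of_ne (by omega)]
    obtain ⟨ho, hl⟩ := S.eq_ord_lead hc0 hb
    refine ⟨fun h0 => hc0 (by rw [h0, coeff_zero]; rfl), ho, ?_⟩
    rw [hl, hcoeff n le_rfl, Finsupp.single_eq_same]

lemma adj_ne_zero {r : R} (hr : r ≠ 0) : S.adj r ≠ 0 :=
  (S.adj_facts (S.ord r) r hr le_rfl).1

lemma ord_adj {r : R} (hr : r ≠ 0) : S.ord (S.adj r) = S.ord r :=
  (S.adj_facts (S.ord r) r hr le_rfl).2.1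

lemma lead_adj {r : R} (hr : r ≠ 0) :
    S.lead (S.adj r) = (-1 : K) ^ (S.ord r) * S.lead r :=
  (S.adj_facts (S.ord r) r hr le_rfl).2.2

lemma ord_one : S.ord (1 : R) = 0 := by
  have := S.ord_mono (i := 0) (one_ne_zero : (1:K) ≠ 0)
  simpa using this.1

lemma lead_one : S.lead (1 : R) = 1 := by
  have := S.ord_mono (i := 0) (one_ne_zero : (1:K) ≠ 0)
  simpa using this.2

lemma ord_neg_one : S.ord (-1 : R) = 0 := by
  have := S.ord_mono (i := 0) (neg_ne_zero.mpr (one_ne_zero : (1:K) ≠ 0))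
  simpa using this.1

lemma lead_neg_one : S.lead (-1 : R) = -1 := by
  have := S.ord_mono (i := 0) (neg_ne_zero.mpr (one_ne_zero : (1:K) ≠ 0))
  simpa using this.2

end DiffOpRing

section MatrixPart
open Matrix

variable {K : Type} [Field K] {d : K → K} {R : Type} [Ring R]

variable (R) in
def elemM {m : ℕ} (i j : Fin m) (r : R) : Matrix (Fin m) (Fin m) R :=
  1 + Matrix.single i j r

variable (R) in
def GenSet (m : ℕ) : Set (Matrix (Fin m) (Fin m) R) :=
  {M | (∃ i j r, i ≠ j ∧ M = elemM R i j r) ∨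
       (∃ v : Fin m → R, (∀ i, v i ≠ 0) ∧ M = diagonal v)}

lemma elemM_mul_apply {m : ℕ} (i j : Fin m) (r : R) (B : Matrix (Fin m) (Fin m) R)
    (k l : Fin m) : (elemM R i j r * B) k l = B k l + if k = i then r * B j l else 0 := by
  rw [elemM, add_mul, one_mul, Matrix.add_apply]
  congr 1
  by_cases h : k = i
  · subst h; simp
  · simp [h]

lemma mul_elemM_apply {m : ℕ} (i j : Fin m) (r : R) (B : Matrix (Fin m) (Fin m) R)
    (k l : Fin m) : (B * elemM R i j r) k l = B k l + if l = j then B k i * r else 0 := by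
  rw [elemM, mul_add, mul_one, Matrix.add_apply]
  congr 1
  by_cases h : l = j
  · subst h; simp
  · simp [h]

lemma elemM_zero {m : ℕ} (i j : Fin m) : elemM R i j 0 = 1 := by
  rw [elemM, Matrix.single_zero, add_zero]

lemma elemM_mul_elemM {m : ℕ} {i j : Fin m} (hij : i ≠ j) (r s : R) :
    elemM R i j r * elemM R i j s = elemM R i j (r + s) := by
  rw [elemM, elemM, elemM, add_mul, one_mul, mul_add, mul_one,
    Matrix.single_mul_single_of_ne (h := Ne.symm hij), Matrix.single_add]
  abel

lemma elemM_mul_inv {m : ℕ} {i j : Fin m} (hij : i ≠ j) (r : R) :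
    elemM R i j r * elemM R i j (-r) = 1 := by
  rw [elemM_mul_elemM hij, add_neg_cancel, elemM_zero]

-- Nondeg basics
lemma nondeg_mul {m : ℕ} {A B : Matrix (Fin m) (Fin m) R} (hA : Nondeg A) (hB : Nondeg B) :
    Nondeg (A * B) := by
  intro X hX
  rw [← Matrix.mulVec_mulVec] at hX
  exact hB X (hA _ hX)

lemma nondeg_one {m : ℕ} : Nondeg (1 : Matrix (Fin m) (Fin m) R) := by
  intro X hX
  rwa [Matrix.one_mulVec] at hX

/-- two-sided invertible matrices -/
def InvP {m : ℕ} (U : Matrix (Fin m) (Fin m) R) : Prop :=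
  ∃ V, U * V = 1 ∧ V * U = 1

lemma invP_nondeg {m : ℕ} {U : Matrix (Fin m) (Fin m) R} (hU : InvP U) : Nondeg U := by
  obtain ⟨V, hUV, hVU⟩ := hU
  intro X hX
  have : V.mulVec (U.mulVec X) = X := by rw [Matrix.mulVec_mulVec, hVU, Matrix.one_mulVec]
  rw [hX, Matrix.mulVec_zero] at this
  exact this.symm

lemma invP_mul_nondeg_iff {m : ℕ} {U A : Matrix (Fin m) (Fin m) R} (hU : InvP U) :
    Nondeg (U * A) ↔ Nondeg A := by
  obtain ⟨V, hUV, hVU⟩ := hU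
  constructor
  · intro h X hX
    apply h X
    rw [← Matrix.mulVec_mulVec, hX, Matrix.mulVec_zero]
  · intro h X hX
    rw [← Matrix.mulVec_mulVec] at hX
    have : V.mulVec (U.mulVec (A.mulVec X)) = A.mulVec X := by
      rw [Matrix.mulVec_mulVec, hVU, Matrix.one_mulVec]
    rw [hX, Matrix.mulVec_zero] at this
    exact h X this.symm

lemma nondeg_mul_invP_iff {m : ℕ} {U A : Matrix (Fin m) (Fin m) R} (hU : InvP U) :
    Nondeg (A * U) ↔ Nondeg A := by
  obtain ⟨V, hUV, hVU⟩ := hU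
  constructor
  · intro h X hX
    have hVX : (A * U).mulVec (V.mulVec X) = 0 := by
      rw [Matrix.mulVec_mulVec, mul_assoc, hUV, mul_one, hX]
    have := h _ hVX
    have hX' : U.mulVec (V.mulVec X) = X := by
      rw [Matrix.mulVec_mulVec, hUV, Matrix.one_mulVec]
    rw [this, Matrix.mulVec_zero] at hX'
    exact hX'.symm
  · intro h X hX
    have hY : U.mulVec X = 0 := h _ (by rw [Matrix.mulVec_mulVec, hX])
    have : V.mulVec (U.mulVec X) = X := by
      rw [Matrix.mulVec_mulVec, hVU, Matrix.one_mulVec]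
    rw [hY, Matrix.mulVec_zero] at this
    exact this.symm

lemma invP_elemM {m : ℕ} {i j : Fin m} (hij : i ≠ j) (r : R) : InvP (elemM R i j r) :=
  ⟨elemM R i j (-r), elemM_mul_inv hij r, by
    have := elemM_mul_inv hij (-r); rwa [neg_neg] at this⟩

end MatrixPart

section MatrixPart2
open Matrix

variable {K : Type} [Field K] {d : K → K} {R : Type} [Ring R] (S : DiffOpRing K d R)

include S in
lemma nondeg_diagonal {m : ℕ} {v : Fin m → R} (hv : ∀ i, v i ≠ 0) :
    Nondeg (diagonal v) := by
  intro X hX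
  funext i
  have h := congrFun hX i
  rw [Matrix.mulVec_diagonal] at h
  by_contra hXi
  exact S.mul_ne_zero' (hv i) hXi h

noncomputable def DiffOpRing.adjHom : R →+ R where
  toFun := S.adj
  map_zero' := S.adj_zero
  map_add' := S.adj_add

lemma adjM_apply {m : ℕ} (A : Matrix (Fin m) (Fin m) R) (i j : Fin m) :
    adjM S A i j = S.adj (A j i) := rfl

lemma adjM_one {m : ℕ} : adjM S (1 : Matrix (Fin m) (Fin m) R) = 1 := by
  ext i j
  rw [adjM_apply, Matrix.one_apply, Matrix.one_apply]
  by_cases h : j = i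
  · rw [if_pos h, if_pos h.symm, S.adj_one]
  · rw [if_neg h, if_neg (fun hh => h hh.symm), S.adj_zero]

lemma adjM_mul {m : ℕ} (A B : Matrix (Fin m) (Fin m) R) :
    adjM S (A * B) = adjM S B * adjM S A := by
  ext i j
  rw [adjM_apply, Matrix.mul_apply, Matrix.mul_apply]
  rw [show S.adj = ⇑S.adjHom from rfl, map_sum]
  apply Finset.sum_congr rfl
  intro k _
  show S.adj (A j k * B k i) = _
  rw [S.adj_mul, adjM_apply, adjM_apply]

lemma adjM_adjM {m : ℕ} (A : Matrix (Fin m) (Fin m) R) : adjM S (adjM S A) = A := by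
  ext i j
  rw [adjM_apply, adjM_apply, S.adj_adj]

lemma elemM_apply {m : ℕ} (i j : Fin m) (r : R) (k l : Fin m) :
    elemM R i j r k l = (if k = l then (1:R) else 0) + if k = i ∧ l = j then r else 0 := by
  rw [elemM, Matrix.add_apply, Matrix.one_apply, Matrix.single, Matrix.of_apply]
  congr 1
  exact if_congr ⟨fun h => ⟨h.1.symm, h.2.symm⟩, fun h => ⟨h.1.symm, h.2.symm⟩⟩ rfl rfl

lemma adjM_elemM {m : ℕ} (i j : Fin m) (r : R) :
    adjM S (elemM R i j r) = elemM R j i (S.adj r) := by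
  ext k l
  rw [adjM_apply, elemM_apply, elemM_apply, S.adj_add]
  congr 1
  · by_cases h : l = k
    · rw [if_pos h, if_pos h.symm, S.adj_one]
    · rw [if_neg h, if_neg (fun hh => h hh.symm), S.adj_zero]
  · by_cases h : l = i ∧ k = j
    · rw [if_pos h, if_pos ⟨h.2, h.1⟩]
    · rw [if_neg h, if_neg (fun hh => h ⟨hh.2, hh.1⟩), S.adj_zero]

lemma adjM_diagonal {m : ℕ} (v : Fin m → R) :
    adjM S (diagonal v) = diagonal (fun i => S.adj (v i)) := by
  ext i j
  rw [adjM_apply, Matrix.diagonal_apply, Matrix.diagonal_apply]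
  by_cases h : i = j
  · subst h; rw [if_pos rfl, if_pos rfl]
  · rw [if_neg (fun hh => h hh.symm), if_neg h, S.adj_zero]

-- swaps
variable (R) in
def swpM {m : ℕ} (i j : Fin m) : Matrix (Fin m) (Fin m) R :=
  (1 : Matrix (Fin m) (Fin m) R).submatrix (Equiv.swap i j) ⇑(Equiv.refl (Fin m))

lemma swpM_mul {m : ℕ} (i j : Fin m) (A : Matrix (Fin m) (Fin m) R) :
    swpM R i j * A = A.submatrix (⇑(Equiv.swap i j)) id := by
  rw [swpM, show (1 : Matrix (Fin m) (Fin m) R).submatrix (⇑(Equiv.swap i j)) ⇑(Equiv.refl (Fin m))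
      = (1 : Matrix (Fin m) (Fin m) R).submatrix (⇑(Equiv.swap i j)) ⇑(Equiv.refl (Fin m)) from rfl,
    Matrix.one_submatrix_mul (⇑(Equiv.swap i j)) (Equiv.refl (Fin m)) A]
  rfl

lemma mul_swpM {m : ℕ} (i j : Fin m) (A : Matrix (Fin m) (Fin m) R) :
    A * swpM R i j = A.submatrix id (⇑(Equiv.swap i j)) := by
  rw [swpM, show ⇑(Equiv.refl (Fin m)) = id from rfl]
  rw [Matrix.mul_submatrix_one (Equiv.swap i j) id A]
  rw [Equiv.symm_swap]
  rfl

lemma swpM_swpM {m : ℕ} (i j : Fin m) : swpM R i j * swpM R i j = 1 := by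
  rw [swpM_mul, swpM, Matrix.submatrix_submatrix]
  ext k l
  rw [Matrix.submatrix_apply]
  show (1 : Matrix (Fin m) (Fin m) R) _ _ = _
  simp [Matrix.one_apply, Function.comp_apply, Equiv.swap_apply_self]

lemma invP_swpM {m : ℕ} (i j : Fin m) : InvP (swpM R i j) :=
  ⟨swpM R i j, swpM_swpM i j, swpM_swpM i j⟩

lemma swpM_eq {m : ℕ} {i j : Fin m} (hij : i ≠ j) :
    swpM R i j = elemM R i j 1 * (elemM R j i (-1) *
      (elemM R i j 1 * diagonal (fun k => if k = i then (-1:R) else 1))) := by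
  ext k l
  simp only [swpM, Matrix.submatrix_apply, Matrix.one_apply, Equiv.swap_apply_def,
    elemM_mul_apply, elemM_apply, Matrix.diagonal_apply, Equiv.coe_refl, id]
  by_cases hki : k = i <;> by_cases hkj : k = j <;> by_cases hli : l = i <;>
    by_cases hlj : l = j <;>
    (try simp_all) <;> (try split_ifs) <;> simp_all <;> try ring

lemma diag_sq_one {m : ℕ} (i : Fin m) :
    diagonal (fun k => if k = i then (-1:R) else 1) *
      diagonal (fun k => if k = i then (-1:R) else 1) = 1 := by
  rw [Matrix.diagonal_mul_diagonal]
  rw [show (fun k => (if k = i then (-1:R) else 1) * (if k = i then (-1:R) else 1))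
      = fun _ => (1:R) from funext fun k => by by_cases h : k = i <;> simp [h]]
  exact Matrix.diagonal_one

set_option maxHeartbeats 1000000 in
lemma diag_conj_elemM {m : ℕ} {i j : Fin m} (hij : i ≠ j) (s : R) :
    diagonal (fun k => if k = i then (-1:R) else 1) * elemM R i j s *
      diagonal (fun k => if k = i then (-1:R) else 1) = elemM R i j (-s) := by
  ext k l
  rw [Matrix.mul_diagonal, Matrix.diagonal_mul, elemM_apply, elemM_apply]
  by_cases hki : k = i <;> by_cases hlj : l = j <;> by_cases hkl : k = l <;>
    simp_all [Ne.symm hij] <;> try noncomm_ring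

end MatrixPart2

section MatrixPart3
open Matrix

variable {K : Type} [Field K] {d : K → K} {R : Type} [Ring R] (S : DiffOpRing K d R)

variable (R) in
def cl (m : ℕ) : Submonoid (Matrix (Fin m) (Fin m) R) := Submonoid.closure (GenSet R m)

lemma elemM_mem {m : ℕ} {i j : Fin m} (hij : i ≠ j) (r : R) : elemM R i j r ∈ cl R m :=
  Submonoid.subset_closure (Or.inl ⟨i, j, r, hij, rfl⟩)

lemma diagonal_mem {m : ℕ} {v : Fin m → R} (hv : ∀ i, v i ≠ 0) : diagonal v ∈ cl R m :=
  Submonoid.subset_closure (Or.inr ⟨v, hv, rfl⟩)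

include S in
lemma neg_one_ne_zero' : (-1 : R) ≠ 0 := neg_ne_zero.mpr S.one_ne_zero'

include S in
lemma swpM_mem {m : ℕ} (i j : Fin m) : swpM R i j ∈ cl R m := by
  by_cases hij : i = j
  · subst hij
    have : swpM R i i = 1 := by
      ext k l
      rw [swpM, Matrix.submatrix_apply]
      show (1 : Matrix (Fin m) (Fin m) R) _ _ = _
      simp [Matrix.one_apply, Equiv.swap_self]
    rw [this]; exact one_mem _
  · rw [swpM_eq hij]
    refine mul_mem (elemM_mem hij 1) (mul_mem (elemM_mem (Ne.symm hij) (-1))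
      (mul_mem (elemM_mem hij 1) (diagonal_mem ?_)))
    intro k
    by_cases h : k = i
    · rw [if_pos h]; exact neg_one_ne_zero' S
    · rw [if_neg h]; exact S.one_ne_zero'

lemma mem_of_mul_left {m : ℕ} {U V A : Matrix (Fin m) (Fin m) R} (hU : U ∈ cl R m)
    (hV : V ∈ cl R m) (hVU : V * U = 1) (h : (U * A) ∈ cl R m) : A ∈ cl R m := by
  have : A = V * (U * A) := by rw [← mul_assoc, hVU, one_mul]
  rw [this]; exact mul_mem hV h

lemma mem_of_mul_right {m : ℕ} {U V A : Matrix (Fin m) (Fin m) R} (hU : U ∈ cl R m)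
    (hV : V ∈ cl R m) (hUV : U * V = 1) (h : (A * U) ∈ cl R m) : A ∈ cl R m := by
  have : A = (A * U) * V := by rw [mul_assoc, hUV, mul_one]
  rw [this]; exact mul_mem h hV

-- embedding into size m+1
variable (R) in
def emb {m : ℕ} (M : Matrix (Fin m) (Fin m) R) : Matrix (Fin (m + 1)) (Fin (m + 1)) R :=
  Matrix.of fun i j =>
    Fin.cases (Fin.cases (1 : R) (fun _ => 0) j)
      (fun i' => Fin.cases 0 (fun j' => M i' j') j) i

@[simp] lemma emb_00 {m : ℕ} (M : Matrix (Fin m) (Fin m) R) : emb R M 0 0 = 1 := rfl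
@[simp] lemma emb_0s {m : ℕ} (M : Matrix (Fin m) (Fin m) R) (j : Fin m) :
    emb R M 0 j.succ = 0 := by simp [emb]
@[simp] lemma emb_s0 {m : ℕ} (M : Matrix (Fin m) (Fin m) R) (i : Fin m) :
    emb R M i.succ 0 = 0 := by simp [emb]
@[simp] lemma emb_ss {m : ℕ} (M : Matrix (Fin m) (Fin m) R) (i j : Fin m) :
    emb R M i.succ j.succ = M i j := by simp [emb]

lemma emb_one {m : ℕ} : emb R (1 : Matrix (Fin m) (Fin m) R) = 1 := by
  ext i j
  induction i using Fin.cases with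
  | zero =>
    induction j using Fin.cases with
    | zero => rw [emb_00, Matrix.one_apply_eq]
    | succ j' => rw [emb_0s, Matrix.one_apply_ne (Ne.symm (Fin.succ_ne_zero j'))]
  | succ i' =>
    induction j using Fin.cases with
    | zero => rw [emb_s0, Matrix.one_apply_ne (Fin.succ_ne_zero i')]
    | succ j' =>
      rw [emb_ss, Matrix.one_apply, Matrix.one_apply]
      by_cases h : i' = j'
      · rw [if_pos h, if_pos (by rw [h])]
      · rw [if_neg h, if_neg (fun hh => h (Fin.succ_inj.mp hh))]

lemma emb_mul {m : ℕ} (M N : Matrix (Fin m) (Fin m) R) :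
    emb R (M * N) = emb R M * emb R N := by
  ext i j
  rw [Matrix.mul_apply, Fin.sum_univ_succ]
  induction i using Fin.cases with
  | zero =>
    induction j using Fin.cases with
    | zero => simp
    | succ j' => simp
  | succ i' =>
    induction j using Fin.cases with
    | zero => simp
    | succ j' => simp [Matrix.mul_apply]

include S in
lemma emb_mem {m : ℕ} {M : Matrix (Fin m) (Fin m) R} (h : M ∈ cl R m) :
    emb R M ∈ cl R (m + 1) := by
  induction h using Submonoid.closure_induction with
  | mem x hx =>
    rcases hx with ⟨i, j, r, hij, rfl⟩ | ⟨v, hv, rfl⟩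
    · have : emb R (elemM R i j r) = elemM R i.succ j.succ r := by
        ext k l
        induction k using Fin.cases with
        | zero =>
          induction l using Fin.cases with
          | zero => simp [elemM_apply, Ne.symm (Fin.succ_ne_zero i)]
          | succ l' => simp [elemM_apply, Ne.symm (Fin.succ_ne_zero l'), Ne.symm (Fin.succ_ne_zero i)]
        | succ k' =>
          induction l using Fin.cases with
          | zero => simp [elemM_apply, Fin.succ_ne_zero k', Ne.symm (Fin.succ_ne_zero j)]
          | succ l' => simp [elemM_apply, Fin.succ_inj]
      rw [this]
      exact elemM_mem (fun hh => hij (Fin.succ_inj.mp hh)) r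
    · have : emb R (diagonal v) = diagonal (Fin.cons 1 v) := by
        ext k l
        induction k using Fin.cases with
        | zero =>
          induction l using Fin.cases with
          | zero => simp
          | succ l' => simp [Matrix.diagonal_apply_ne _ (Ne.symm (Fin.succ_ne_zero l'))]
        | succ k' =>
          induction l using Fin.cases with
          | zero => simp [Matrix.diagonal_apply_ne _ (Fin.succ_ne_zero k')]
          | succ l' =>
            rw [emb_ss, Matrix.diagonal_apply, Matrix.diagonal_apply]
            by_cases h : k' = l'
            · rw [if_pos h, if_pos (by rw [h]), Fin.cons_succ]
            · rw [if_neg h, if_neg (fun hh => h (Fin.succ_inj.mp hh))]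
      rw [this]
      apply diagonal_mem
      intro k
      induction k using Fin.cases with
      | zero => rw [Fin.cons_zero]; exact S.one_ne_zero'
      | succ k' => rw [Fin.cons_succ]; exact hv k'
  | one => rw [emb_one]; exact one_mem _
  | mul x y hx hy ihx ihy => rw [emb_mul]; exact mul_mem ihx ihy

end MatrixPart3

section MatrixPart4
open Matrix

variable {K : Type} [Field K] {d : K → K} {R : Type} [Ring R] (S : DiffOpRing K d R)

open scoped Classical in
noncomputable def cnt {m : ℕ} (A : Matrix (Fin (m+1)) (Fin (m+1)) R) : ℕ :=
  ((Finset.univ : Finset (Fin (m+1))).filter (fun i => i ≠ 0 ∧ A i 0 ≠ 0)).card +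
  ((Finset.univ : Finset (Fin (m+1))).filter (fun j => j ≠ 0 ∧ A 0 j ≠ 0)).card

lemma cnt_le {m : ℕ} (A : Matrix (Fin (m+1)) (Fin (m+1)) R) : cnt A ≤ 2 * m + 2 := by
  classical
  have h1 := Finset.card_filter_le (Finset.univ : Finset (Fin (m+1)))
    (fun i => i ≠ 0 ∧ A i 0 ≠ 0)
  have h2 := Finset.card_filter_le (Finset.univ : Finset (Fin (m+1)))
    (fun j => j ≠ 0 ∧ A 0 j ≠ 0)
  have hc : (Finset.univ : Finset (Fin (m+1))).card = m + 1 := by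
    rw [Finset.card_univ, Fintype.card_fin]
  rw [cnt]
  omega

include S in
lemma reduce {m : ℕ}
    (IHn : ∀ B : Matrix (Fin m) (Fin m) R, Nondeg B → B ∈ cl R m) :
    ∀ N : ℕ, ∀ A : Matrix (Fin (m+1)) (Fin (m+1)) R, Nondeg A → A 0 0 ≠ 0 →
      (2 * m + 3) * S.ord (A 0 0) + cnt A ≤ N → A ∈ cl R (m+1) := by
  classical
  intro N
  induction N using Nat.strong_induction_on with
  | _ N IH =>
    intro A hA hp hN
    by_cases hrow : ∃ i : Fin (m+1), i ≠ 0 ∧ A i 0 ≠ 0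
    · -- clear a column entry
      obtain ⟨i, hi0, hAi0⟩ := hrow
      obtain ⟨q, r, hdiv, hrem⟩ := S.divL hp (A i 0)
      set A₂ := elemM R i 0 (-q) * A with hA₂
      have hA₂app : ∀ k l, A₂ k l = A k l + if k = i then -q * A 0 l else 0 :=
        fun k l => elemM_mul_apply i 0 (-q) A k l
      have hA₂00 : A₂ 0 0 = A 0 0 := by rw [hA₂app, if_neg (Ne.symm hi0), add_zero]
      have hA₂i0 : A₂ i 0 = r := by rw [hA₂app, if_pos rfl, hdiv, neg_mul]; abel
      have hA₂row : ∀ k, k ≠ i → A₂ k 0 = A k 0 := by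
        intro k hk; rw [hA₂app, if_neg hk, add_zero]
      have hA₂col : ∀ l, A₂ 0 l = A 0 l := by
        intro l; rw [hA₂app, if_neg (Ne.symm hi0), add_zero]
      have hinv : InvP (elemM R i 0 (-q)) := invP_elemM hi0 (-q)
      have hA₂nd : Nondeg A₂ := (invP_mul_nondeg_iff hinv).mpr hA
      have htrans : A₂ ∈ cl R (m+1) → A ∈ cl R (m+1) := by
        intro h
        exact mem_of_mul_left (elemM_mem hi0 (-q)) (elemM_mem hi0 q)
          (by rw [elemM_mul_elemM hi0, add_neg_cancel, elemM_zero]) h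
      by_cases hr0 : r = 0
      · -- remainder zero: cnt decreases
        apply htrans
        apply IH ((2 * m + 3) * S.ord (A₂ 0 0) + cnt A₂) _ A₂ hA₂nd (by rwa [hA₂00]) le_rfl
        -- measure decreases
        rw [hA₂00]
        have hcnt : cnt A₂ < cnt A := by
          have hsub1 : (Finset.univ.filter (fun i' : Fin (m+1) => i' ≠ 0 ∧ A₂ i' 0 ≠ 0)) ⊂
              (Finset.univ.filter (fun i' : Fin (m+1) => i' ≠ 0 ∧ A i' 0 ≠ 0)) := by
            rw [Finset.ssubset_iff_of_subset]
            · exact ⟨i, Finset.mem_filter.mpr ⟨Finset.mem_univ _, hi0, hAi0⟩,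
                fun hmem => ((Finset.mem_filter.mp hmem).2.2)
                  (by rw [hA₂i0, hr0])⟩
            · intro k hk
              obtain ⟨_, hk0, hkA⟩ := Finset.mem_filter.mp hk
              refine Finset.mem_filter.mpr ⟨Finset.mem_univ _, hk0, ?_⟩
              by_cases hki : k = i
              · exact absurd (show A₂ k 0 = 0 by rw [hki, hA₂i0, hr0]) hkA
              · rwa [hA₂row k hki] at hkA
          have heq2 : (Finset.univ.filter (fun j : Fin (m+1) => j ≠ 0 ∧ A₂ 0 j ≠ 0)) =
              (Finset.univ.filter (fun j : Fin (m+1) => j ≠ 0 ∧ A 0 j ≠ 0)) := by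
            apply Finset.filter_congr
            intro j _
            rw [hA₂col]
          rw [cnt, cnt, heq2]
          have := Finset.card_lt_card hsub1
          omega
        omega
      · -- remainder nonzero: pivot order decreases after a swap
        have hrlt : S.ord r < S.ord (A 0 0) := hrem.resolve_left hr0
        set A₃ := swpM R 0 i * A₂ with hA₃
        have hA₃app : ∀ k l, A₃ k l = A₂ (Equiv.swap 0 i k) l := by
          intro k l; rw [hA₃, swpM_mul, Matrix.submatrix_apply]; rfl
        have hA₃00 : A₃ 0 0 = r := by
          rw [hA₃app, Equiv.swap_apply_left, hA₂i0]
        have hA₃nd : Nondeg A₃ := (invP_mul_nondeg_iff (invP_swpM 0 i)).mpr hA₂nd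
        have htrans3 : A₃ ∈ cl R (m+1) → A₂ ∈ cl R (m+1) := by
          intro h
          exact mem_of_mul_left (swpM_mem S 0 i) (swpM_mem S 0 i) (swpM_swpM 0 i) h
        apply htrans; apply htrans3
        apply IH ((2 * m + 3) * S.ord (A₃ 0 0) + cnt A₃) _ A₃ hA₃nd
          (by rw [hA₃00]; exact hr0) le_rfl
        -- measure strictly less
        have hcnt3 := cnt_le A₃
        have hordlt : S.ord (A₃ 0 0) < S.ord (A 0 0) := by rw [hA₃00]; exact hrlt
        have hmul : (2 * m + 3) * S.ord (A₃ 0 0) + (2 * m + 3) ≤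
            (2 * m + 3) * S.ord (A 0 0) := by
          have h1 : S.ord (A₃ 0 0) + 1 ≤ S.ord (A 0 0) := hordlt
          calc (2 * m + 3) * S.ord (A₃ 0 0) + (2 * m + 3)
              = (2 * m + 3) * (S.ord (A₃ 0 0) + 1) := by ring
            _ ≤ (2 * m + 3) * S.ord (A 0 0) := Nat.mul_le_mul_left _ h1
        omega
    · by_cases hcol : ∃ j : Fin (m+1), j ≠ 0 ∧ A 0 j ≠ 0
      · -- clear a row entry (column operations)
        obtain ⟨j, hj0, hA0j⟩ := hcol
        obtain ⟨q, r, hdiv, hrem⟩ := S.divR hp (A 0 j)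
        set A₂ := A * elemM R 0 j (-q) with hA₂
        have hA₂app : ∀ k l, A₂ k l = A k l + if l = j then A k 0 * -q else 0 :=
          fun k l => mul_elemM_apply 0 j (-q) A k l
        have hA₂00 : A₂ 0 0 = A 0 0 := by rw [hA₂app, if_neg (Ne.symm hj0), add_zero]
        have hA₂0j : A₂ 0 j = r := by rw [hA₂app, if_pos rfl, hdiv, mul_neg]; abel
        have hA₂colk : ∀ l, l ≠ j → ∀ k, A₂ k l = A k l := by
          intro l hl k; rw [hA₂app, if_neg hl, add_zero]
        have hinv : InvP (elemM R 0 j (-q)) := invP_elemM (Ne.symm hj0) (-q)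
        have hA₂nd : Nondeg A₂ := (nondeg_mul_invP_iff hinv).mpr hA
        have htrans : A₂ ∈ cl R (m+1) → A ∈ cl R (m+1) := by
          intro h
          exact mem_of_mul_right (elemM_mem (Ne.symm hj0) (-q)) (elemM_mem (Ne.symm hj0) q)
            (by rw [elemM_mul_elemM (Ne.symm hj0), neg_add_cancel, elemM_zero]) h
        by_cases hr0 : r = 0
        · apply htrans
          apply IH ((2 * m + 3) * S.ord (A₂ 0 0) + cnt A₂) _ A₂ hA₂nd (by rwa [hA₂00]) le_rfl
          rw [hA₂00]
          have hcnt : cnt A₂ < cnt A := by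
            have hsub1 : (Finset.univ.filter (fun j' : Fin (m+1) => j' ≠ 0 ∧ A₂ 0 j' ≠ 0)) ⊂
                (Finset.univ.filter (fun j' : Fin (m+1) => j' ≠ 0 ∧ A 0 j' ≠ 0)) := by
              rw [Finset.ssubset_iff_of_subset]
              · exact ⟨j, Finset.mem_filter.mpr ⟨Finset.mem_univ _, hj0, hA0j⟩,
                  fun hmem => ((Finset.mem_filter.mp hmem).2.2) (by rw [hA₂0j, hr0])⟩
              · intro k hk
                obtain ⟨_, hk0, hkA⟩ := Finset.mem_filter.mp hk
                refine Finset.mem_filter.mpr ⟨Finset.mem_univ _, hk0, ?_⟩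
                by_cases hkj : k = j
                · exact absurd (show A₂ 0 k = 0 by rw [hkj, hA₂0j, hr0]) hkA
                · rwa [hA₂colk k hkj] at hkA
            have heq2 : (Finset.univ.filter (fun i' : Fin (m+1) => i' ≠ 0 ∧ A₂ i' 0 ≠ 0)) =
                (Finset.univ.filter (fun i' : Fin (m+1) => i' ≠ 0 ∧ A i' 0 ≠ 0)) := by
              apply Finset.filter_congr
              intro i' _
              rw [hA₂colk 0 (Ne.symm hj0) i']
            rw [cnt, cnt, heq2]
            have := Finset.card_lt_card hsub1
            omega
          omega
        · have hrlt : S.ord r < S.ord (A 0 0) := hrem.resolve_left hr0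
          set A₃ := A₂ * swpM R 0 j with hA₃
          have hA₃app : ∀ k l, A₃ k l = A₂ k (Equiv.swap 0 j l) := by
            intro k l; rw [hA₃, mul_swpM, Matrix.submatrix_apply]; rfl
          have hA₃00 : A₃ 0 0 = r := by
            rw [hA₃app, Equiv.swap_apply_left, hA₂0j]
          have hA₃nd : Nondeg A₃ := (nondeg_mul_invP_iff (invP_swpM 0 j)).mpr hA₂nd
          have htrans3 : A₃ ∈ cl R (m+1) → A₂ ∈ cl R (m+1) := by
            intro h
            exact mem_of_mul_right (swpM_mem S 0 j) (swpM_mem S 0 j) (swpM_swpM 0 j) h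
          apply htrans; apply htrans3
          apply IH ((2 * m + 3) * S.ord (A₃ 0 0) + cnt A₃) _ A₃ hA₃nd
            (by rw [hA₃00]; exact hr0) le_rfl
          have hcnt3 := cnt_le A₃
          have hordlt : S.ord (A₃ 0 0) < S.ord (A 0 0) := by rw [hA₃00]; exact hrlt
          have hmul : (2 * m + 3) * S.ord (A₃ 0 0) + (2 * m + 3) ≤
              (2 * m + 3) * S.ord (A 0 0) := by
            have h1 : S.ord (A₃ 0 0) + 1 ≤ S.ord (A 0 0) := hordlt
            calc (2 * m + 3) * S.ord (A₃ 0 0) + (2 * m + 3)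
                = (2 * m + 3) * (S.ord (A₃ 0 0) + 1) := by ring
              _ ≤ (2 * m + 3) * S.ord (A 0 0) := Nat.mul_le_mul_left _ h1
          omega
      · -- borders are clear: peel off a block
        push_neg at hrow hcol
        have h1 : ∀ i : Fin (m+1), i ≠ 0 → A i 0 = 0 := by
          intro i hi; by_contra h; exact h (hrow i hi)
        have h2 : ∀ j : Fin (m+1), j ≠ 0 → A 0 j = 0 := by
          intro j hj; by_contra h; exact h (hcol j hj)
        set B := A.submatrix Fin.succ Fin.succ with hB
        have hBnd : Nondeg B := by
          intro X hX
          have hX' : A.mulVec (Fin.cons 0 X) = 0 := by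
            funext k
            simp only [Matrix.mulVec, dotProduct, Pi.zero_apply]
            rw [Fin.sum_univ_succ]
            induction k using Fin.cases with
            | zero =>
              rw [Fin.cons_zero, mul_zero, zero_add]
              apply Finset.sum_eq_zero
              intro l _
              rw [h2 l.succ (Fin.succ_ne_zero l), zero_mul]
            | succ k' =>
              rw [Fin.cons_zero, mul_zero, zero_add]
              have := congrFun hX k'
              rw [Pi.zero_apply] at this
              rw [← this]
              show _ = ∑ l, B k' l * X l
              apply Finset.sum_congr rfl
              intro l _
              rw [Fin.cons_succ]
              rfl
          have := hA _ hX'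
          funext x
          have hx := congrFun this x.succ
          rwa [Fin.cons_succ, Pi.zero_apply] at hx
        have hfact : A = diagonal (Fin.cons (A 0 0) (fun _ => (1:R))) * emb R B := by
          ext k l
          rw [Matrix.diagonal_mul]
          induction k using Fin.cases with
          | zero =>
            induction l using Fin.cases with
            | zero => rw [Fin.cons_zero, emb_00, mul_one]
            | succ l' => rw [Fin.cons_zero, emb_0s, mul_zero, h2 l'.succ (Fin.succ_ne_zero l')]
          | succ k' =>
            induction l using Fin.cases with
            | zero => rw [Fin.cons_succ, emb_s0, mul_zero, h1 k'.succ (Fin.succ_ne_zero k')]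
            | succ l' => rw [Fin.cons_succ, emb_ss, one_mul]; rfl
        rw [hfact]
        apply mul_mem
        · apply diagonal_mem
          intro k
          induction k using Fin.cases with
          | zero => rwa [Fin.cons_zero]
          | succ k' => rw [Fin.cons_succ]; exact S.one_ne_zero'
        · exact emb_mem S (IHn B hBnd)

include S in
lemma nondeg_mem : ∀ m : ℕ, ∀ A : Matrix (Fin m) (Fin m) R, Nondeg A → A ∈ cl R m := by
  intro m
  induction m with
  | zero =>
    intro A _
    have : A = 1 := by ext i j; exact i.elim0
    rw [this]; exact one_mem _
  | succ m IHn =>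
    intro A hA
    have hex : ∃ i j, A i j ≠ 0 := by
      by_contra h
      push_neg at h
      have hX : A.mulVec (fun k => if k = 0 then (1:R) else 0) = 0 := by
        funext k
        simp only [Matrix.mulVec, dotProduct, Pi.zero_apply]
        apply Finset.sum_eq_zero
        intro l _
        rw [h k l, zero_mul]
      have := hA _ hX
      have h0 := congrFun this 0
      rw [if_pos rfl, Pi.zero_apply] at h0
      exact S.one_ne_zero' h0
    obtain ⟨i0, j0, hne⟩ := hex
    set A₁ := swpM R 0 i0 * (A * swpM R 0 j0) with hA₁
    have hA₁app : ∀ k l, A₁ k l = A (Equiv.swap 0 i0 k) (Equiv.swap 0 j0 l) := by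
      intro k l
      rw [hA₁, swpM_mul, Matrix.submatrix_apply, mul_swpM, Matrix.submatrix_apply]
      rfl
    have hA₁00 : A₁ 0 0 ≠ 0 := by
      rw [hA₁app, Equiv.swap_apply_left, Equiv.swap_apply_left]
      exact hne
    have hA₁nd : Nondeg A₁ :=
      (invP_mul_nondeg_iff (invP_swpM 0 i0)).mpr
        ((nondeg_mul_invP_iff (invP_swpM 0 j0)).mpr hA)
    have hA₁mem : A₁ ∈ cl R (m+1) :=
      reduce S IHn ((2 * m + 3) * S.ord (A₁ 0 0) + cnt A₁) A₁ hA₁nd hA₁00 le_rfl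
    have step1 : A * swpM R 0 j0 ∈ cl R (m+1) :=
      mem_of_mul_left (swpM_mem S 0 i0) (swpM_mem S 0 i0) (swpM_swpM 0 i0) hA₁mem
    exact mem_of_mul_right (swpM_mem S 0 j0) (swpM_mem S 0 j0) (swpM_swpM 0 j0) step1

end MatrixPart4

section Final
open Matrix

variable {K : Type} [Field K] [CharZero K] {d : K → K} {R : Type} [Ring R]
  (S : DiffOpRing K d R) {n : ℕ}
  (det1 : Matrix (Fin n) (Fin n) R → K) (deg : Matrix (Fin n) (Fin n) R → ℤ)

section DetLemmas
variable
  (hdet1_mul : ∀ A B : Matrix (Fin n) (Fin n) R, Nondeg A → Nondeg B →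
    det1 (A * B) = det1 A * det1 B)
  (hdeg_mul : ∀ A B : Matrix (Fin n) (Fin n) R, Nondeg A → Nondeg B →
    deg (A * B) = deg A + deg B)
  (hdet1_tri : ∀ T : Matrix (Fin n) (Fin n) R, (∀ i j : Fin n, j < i → T i j = 0) →
    (∀ i, T i i ≠ 0) → det1 T = ∏ i, S.lead (T i i))
  (hdeg_tri : ∀ T : Matrix (Fin n) (Fin n) R, (∀ i j : Fin n, j < i → T i j = 0) →
    (∀ i, T i i ≠ 0) → deg T = ∑ i, (S.ord (T i i) : ℤ))

include S hdet1_tri in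
lemma det1_one' : det1 (1 : Matrix (Fin n) (Fin n) R) = 1 := by
  rw [hdet1_tri 1 (fun i j h => Matrix.one_apply_ne (ne_of_gt h))
    (fun i => by rw [Matrix.one_apply, if_pos rfl]; exact S.one_ne_zero')]
  rw [Finset.prod_congr rfl (fun i _ => by rw [Matrix.one_apply, if_pos rfl, S.lead_one])]
  exact Finset.prod_const_one

include S hdeg_tri in
lemma deg_one' : deg (1 : Matrix (Fin n) (Fin n) R) = 0 := by
  rw [hdeg_tri 1 (fun i j h => Matrix.one_apply_ne (ne_of_gt h))
    (fun i => by rw [Matrix.one_apply, if_pos rfl]; exact S.one_ne_zero')]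
  rw [Finset.sum_congr rfl (fun i _ => by rw [Matrix.one_apply, if_pos rfl, S.ord_one])]
  simp

include S hdet1_mul hdeg_mul hdet1_tri hdeg_tri in
lemma det1_elemM' {i j : Fin n} (hij : i ≠ j) (r : R) :
    det1 (elemM R i j r) = 1 ∧ deg (elemM R i j r) = 0 := by
  classical
  set vΔ : Fin n → R := fun k => if k = i then (-1:R) else 1 with hvΔ
  have hΔv : ∀ k, vΔ k ≠ 0 := by
    intro k
    by_cases h : k = i
    · simp only [hvΔ, if_pos h]; exact neg_one_ne_zero' S
    · simp only [hvΔ, if_neg h]; exact S.one_ne_zero'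
  set Δ := diagonal vΔ with hΔ
  have hΔnd : Nondeg Δ := nondeg_diagonal S hΔv
  have hΔΔ : Δ * Δ = 1 := diag_sq_one i
  have hdet1Δsq : det1 Δ * det1 Δ = 1 := by
    rw [← hdet1_mul Δ Δ hΔnd hΔnd, hΔΔ, det1_one' S det1 hdet1_tri]
  have hΔdiagentry : ∀ k : Fin n, Δ k k = vΔ k := by
    intro k; rw [hΔ, Matrix.diagonal_apply, if_pos rfl]
  have hdegΔ : deg Δ = 0 := by
    rw [hdeg_tri Δ (fun k l h => Matrix.diagonal_apply_ne _ (ne_of_gt h))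
      (fun k => by rw [hΔdiagentry]; exact hΔv k)]
    have hterm : ∀ k : Fin n, (S.ord (Δ k k) : ℤ) = 0 := by
      intro k
      rw [hΔdiagentry]
      by_cases h : k = i
      · simp only [hvΔ, if_pos h, S.ord_neg_one, Nat.cast_zero]
      · simp only [hvΔ, if_neg h, S.ord_one, Nat.cast_zero]
    rw [Finset.sum_congr rfl fun k _ => hterm k]
    simp
  have hconj : ∀ s : R, Δ * elemM R i j s * Δ = elemM R i j (-s) := fun s =>
    diag_conj_elemM hij s
  have hEnd : ∀ s : R, Nondeg (elemM R i j s) := fun s => invP_nondeg (invP_elemM hij s)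
  have hmulE : ∀ s t : R, det1 (elemM R i j s) * det1 (elemM R i j t)
      = det1 (elemM R i j (s + t)) := by
    intro s t
    rw [← hdet1_mul _ _ (hEnd s) (hEnd t), elemM_mul_elemM hij]
  have hfneg : ∀ s : R, det1 (elemM R i j (-s)) = det1 (elemM R i j s) := by
    intro s
    have h1 : det1 (Δ * elemM R i j s * Δ) = det1 Δ * det1 (elemM R i j s) * det1 Δ := by
      rw [hdet1_mul _ _ (nondeg_mul hΔnd (hEnd s)) hΔnd,
        hdet1_mul _ _ hΔnd (hEnd s)]
    rw [← hconj s, h1]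
    have : det1 Δ * det1 (elemM R i j s) * det1 Δ
        = (det1 Δ * det1 Δ) * det1 (elemM R i j s) := by ring
    rw [this, hdet1Δsq, one_mul]
  have hsq : ∀ s : R, det1 (elemM R i j s) * det1 (elemM R i j s) = 1 := by
    intro s
    have h1 := hmulE s (-s)
    rw [add_neg_cancel, elemM_zero, det1_one' S det1 hdet1_tri, hfneg s] at h1
    exact h1
  constructor
  · -- halving trick
    set h2 : R := S.ι (2⁻¹ : K) * r with hh2
    have hsum : h2 + h2 = r := by
      rw [hh2, ← add_mul, ← map_add]
      norm_num
    have := hmulE h2 h2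
    rw [hsum, hsq h2] at this
    exact this.symm
  · -- degree
    have hgneg : deg (elemM R i j (-r)) = deg (elemM R i j r) := by
      have h1 : deg (Δ * elemM R i j r * Δ) = deg Δ + deg (elemM R i j r) + deg Δ := by
        rw [hdeg_mul _ _ (nondeg_mul hΔnd (hEnd r)) hΔnd, hdeg_mul _ _ hΔnd (hEnd r)]
      rw [← hconj r, h1, hdegΔ]
      ring
    have h1 : deg (elemM R i j r) + deg (elemM R i j (-r)) = 0 := by
      rw [← hdeg_mul _ _ (hEnd r) (hEnd (-r)), elemM_mul_elemM hij, add_neg_cancel,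
        elemM_zero, deg_one' S deg hdeg_tri]
    rw [hgneg] at h1
    omega

end DetLemmas
end Final

/-- Let K be a differential field of characteristic 0 and A a matrix
(pseudo)differential operator with adjoint A*. If det(A) = 0 then det(A*) = 0, and if
det(A) ≠ 0 then det(A*) = (-1)^{d(A)} det(A). Here the Dieudonné determinant
det = det₁ · λ^{deg} is described abstractly by its characterizing properties:
det₁ and deg are multiplicative on non-degenerate matrices, and on an upper triangular
matrix with non-zero diagonal entries det₁ is the product of the leading coefficients
of the diagonal entries and deg is the sum of their orders; det(A) = 0 means that A is
degenerate. -/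
theorem stmt_15 (K : Type) [Field K] [CharZero K] (d : K → K)
    (hd_add : ∀ a b : K, d (a + b) = d a + d b)
    (hd_mul : ∀ a b : K, d (a * b) = a * d b + d a * b)
    (R : Type) [Ring R] (S : DiffOpRing K d R)
    (n : ℕ) (det1 : Matrix (Fin n) (Fin n) R → K) (deg : Matrix (Fin n) (Fin n) R → ℤ)
    (hdet1_mul : ∀ A B : Matrix (Fin n) (Fin n) R, Nondeg A → Nondeg B →
      det1 (A * B) = det1 A * det1 B)
    (hdeg_mul : ∀ A B : Matrix (Fin n) (Fin n) R, Nondeg A → Nondeg B →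
      deg (A * B) = deg A + deg B)
    (hdet1_tri : ∀ T : Matrix (Fin n) (Fin n) R, (∀ i j : Fin n, j < i → T i j = 0) →
      (∀ i, T i i ≠ 0) → det1 T = ∏ i, S.lead (T i i))
    (hdeg_tri : ∀ T : Matrix (Fin n) (Fin n) R, (∀ i j : Fin n, j < i → T i j = 0) →
      (∀ i, T i i ≠ 0) → deg T = ∑ i, (S.ord (T i i) : ℤ))
    (A : Matrix (Fin n) (Fin n) R) :
    (¬ Nondeg A → ¬ Nondeg (adjM S A)) ∧
    (Nondeg A → Nondeg (adjM S A) ∧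
      det1 (adjM S A) = (-1 : K) ^ (deg A) * det1 A ∧ deg (adjM S A) = deg A) := by
  have hdet1_one := det1_one' S det1 hdet1_tri
  have hdeg_one := deg_one' S deg hdeg_tri
  have main : ∀ B : Matrix (Fin n) (Fin n) R, Nondeg B →
      Nondeg B ∧ Nondeg (adjM S B) ∧ det1 (adjM S B) = (-1 : K) ^ (deg B) * det1 B ∧
      deg (adjM S B) = deg B := by
    intro B hB
    have hmem : B ∈ Submonoid.closure (GenSet R n) := nondeg_mem S n B hB
    clear hB
    induction hmem using Submonoid.closure_induction with
    | mem x hx =>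
      rcases hx with ⟨i, j, r, hij, rfl⟩ | ⟨v, hv, rfl⟩
      · have hadj : adjM S (elemM R i j r) = elemM R j i (S.adj r) := adjM_elemM S i j r
        have h1 := det1_elemM' S det1 deg hdet1_mul hdeg_mul hdet1_tri hdeg_tri hij r
        have h2 := det1_elemM' S det1 deg hdet1_mul hdeg_mul hdet1_tri hdeg_tri
          (Ne.symm hij) (S.adj r)
        refine ⟨invP_nondeg (invP_elemM hij r), ?_, ?_, ?_⟩
        · rw [hadj]; exact invP_nondeg (invP_elemM (Ne.symm hij) _)
        · rw [hadj, h2.1, h1.1, h1.2, zpow_zero, mul_one]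
        · rw [hadj, h2.2, h1.2]
      · have hv' : ∀ i, S.adj (v i) ≠ 0 := fun i => S.adj_ne_zero (hv i)
        have hadj : adjM S (Matrix.diagonal v) = Matrix.diagonal (fun i => S.adj (v i)) :=
          adjM_diagonal S v
        have htriv : ∀ (w : Fin n → R), (∀ i j : Fin n, j < i → Matrix.diagonal w i j = 0) :=
          fun w i j h => Matrix.diagonal_apply_ne _ (ne_of_gt h)
        have hdentry : ∀ (w : Fin n → R) (k : Fin n), Matrix.diagonal w k k = w k :=
          fun w k => by rw [Matrix.diagonal_apply, if_pos rfl]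
        have hdet1A : det1 (Matrix.diagonal v) = ∏ k, S.lead (v k) := by
          rw [hdet1_tri _ (htriv v) (fun k => by rw [hdentry]; exact hv k)]
          exact Finset.prod_congr rfl fun k _ => by rw [hdentry]
        have hdegA : deg (Matrix.diagonal v) = ∑ k, (S.ord (v k) : ℤ) := by
          rw [hdeg_tri _ (htriv v) (fun k => by rw [hdentry]; exact hv k)]
          exact Finset.sum_congr rfl fun k _ => by rw [hdentry]
        have hdet1adj : det1 (Matrix.diagonal (fun k => S.adj (v k)))
            = ∏ k, S.lead (S.adj (v k)) := by
          rw [hdet1_tri _ (htriv _) (fun k => by rw [hdentry]; exact hv' k)]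
          exact Finset.prod_congr rfl fun k _ => by rw [hdentry]
        have hdegadj : deg (Matrix.diagonal (fun k => S.adj (v k)))
            = ∑ k, (S.ord (S.adj (v k)) : ℤ) := by
          rw [hdeg_tri _ (htriv _) (fun k => by rw [hdentry]; exact hv' k)]
          exact Finset.sum_congr rfl fun k _ => by rw [hdentry]
        refine ⟨nondeg_diagonal S hv, ?_, ?_, ?_⟩
        · rw [hadj]; exact nondeg_diagonal S hv'
        · rw [hadj, hdet1adj, hdegA, hdet1A]
          rw [Finset.prod_congr rfl fun k (_ : k ∈ Finset.univ) => S.lead_adj (hv k)]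
          rw [Finset.prod_mul_distrib, Finset.prod_pow_eq_pow_sum]
          rw [show (∑ k, (S.ord (v k) : ℤ)) = ((∑ k, S.ord (v k) : ℕ) : ℤ) by push_cast; ring]
          rw [zpow_natCast]
        · rw [hadj, hdegadj, hdegA]
          exact Finset.sum_congr rfl fun k _ => by rw [S.ord_adj (hv k)]
    | one =>
      refine ⟨nondeg_one, ?_, ?_, ?_⟩
      · rw [adjM_one]; exact nondeg_one
      · rw [adjM_one, hdet1_one, hdeg_one, zpow_zero, mul_one]
      · rw [adjM_one, hdeg_one]
    | mul x y hx hy ihx ihy =>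
      obtain ⟨hndx, hax, hdx, hgx⟩ := ihx
      obtain ⟨hndy, hay, hdy, hgy⟩ := ihy
      have hadj : adjM S (x * y) = adjM S y * adjM S x := adjM_mul S x y
      refine ⟨nondeg_mul hndx hndy, ?_, ?_, ?_⟩
      · rw [hadj]; exact nondeg_mul hay hax
      · rw [hadj, hdet1_mul _ _ hay hax, hdy, hdx, hdet1_mul _ _ hndx hndy,
          hdeg_mul _ _ hndx hndy, zpow_add₀ (show (-1:K) ≠ 0 by norm_num)]
        ring
      · rw [hadj, hdeg_mul _ _ hay hax, hgy, hgx, hdeg_mul _ _ hndx hndy]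
        ring
  constructor
  · intro hnd hadjnd
    have := (main (adjM S A) hadjnd).2.1
    rw [adjM_adjM] at this
    exact hnd this
  · intro hA
    exact (main A hA).2
end

section
/- Let K be a linearly closed differential field, and let A, B ∈ M_n(K[∂]) with B non-degenerate, satisfying A*B + B*A = 0 and ker A ∩ ker B = 0 in K^n. Then the subspace L_{A,B} = {(B(P), A(P)) : P ∈ K^n} ⊂ K^n ⊕ K^n is maximal isotropic: if G, H ∈ K^n satisfy A*(H) + B*(G) = 0, then there exists F ∈ K^n with G = A(F) and H = B(F). -/
/-- The action A(f) of a differential operator A = Σ a_i ∂^i on f ∈ K. -/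
noncomputable def DiffOpRing.eval {K : Type} [Field K] {d : K → K} {R : Type} [Ring R]
    (S : DiffOpRing K d R) (r : R) (f : K) : K :=
  (S.coeff r).sum fun i a => a * d^[i] f

/-- The action of a matrix differential operator on K^n. -/
noncomputable def actM {K : Type} [Field K] {d : K → K} {R : Type} [Ring R]
    (S : DiffOpRing K d R) {n : ℕ} (A : Matrix (Fin n) (Fin n) R) (v : Fin n → K) :
    Fin n → K :=
  fun i => ∑ j, S.eval (A i j) (v j)

namespace Wk

variable {K : Type} [Field K] {d : K → K} {R : Type} [Ring R] (S : DiffOpRing K d R)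

noncomputable def Psi (c : ℕ →₀ K) : R := c.sum fun i a => S.ι a * S.dop ^ i

lemma Psi_coeff (r : R) : Psi S (S.coeff r) = r := ((S.repr r).choose_spec.1).symm

lemma coeff_Psi (c : ℕ →₀ K) : S.coeff (Psi S c) = c :=
  ((S.repr (Psi S c)).choose_spec.2 c rfl).symm

lemma Psi_injective : Function.Injective (Psi S) := by
  intro a b h
  rw [← coeff_Psi S a, ← coeff_Psi S b, h]

lemma Psi_add (c₁ c₂ : ℕ →₀ K) : Psi S (c₁ + c₂) = Psi S c₁ + Psi S c₂ := by
  unfold Psi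
  exact Finsupp.sum_add_index' (fun i => by simp) (fun i b₁ b₂ => by rw [map_add, add_mul])

lemma Psi_zero : Psi S 0 = 0 := Finsupp.sum_zero_index

lemma Psi_single (i : ℕ) (a : K) : Psi S (Finsupp.single i a) = S.ι a * S.dop ^ i :=
  Finsupp.sum_single_index (by simp)

noncomputable def PsiHom : (ℕ →₀ K) →+ R := AddMonoidHom.mk' (Psi S) (Psi_add S)

lemma coeff_add (r s : R) : S.coeff (r + s) = S.coeff r + S.coeff s := by
  have : Psi S (S.coeff r + S.coeff s) = r + s := by
    rw [Psi_add, Psi_coeff, Psi_coeff]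
  rw [← this, coeff_Psi]

lemma coeff_zero : S.coeff 0 = 0 := by
  have := coeff_Psi S 0
  rwa [Psi_zero] at this

lemma coeff_neg (r : R) : S.coeff (-r) = - S.coeff r := by
  have h := coeff_add S r (-r)
  rw [add_neg_cancel, coeff_zero] at h
  rw [eq_neg_iff_add_eq_zero, add_comm]
  exact h.symm


lemma coeff_sub (r s : R) : S.coeff (r - s) = S.coeff r - S.coeff s := by
  rw [sub_eq_add_neg, coeff_add, coeff_neg, sub_eq_add_neg]

lemma coeff_eq_zero_iff (r : R) : S.coeff r = 0 ↔ r = 0 := by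
  constructor
  · intro h
    have := Psi_coeff S r
    rw [h, Psi_zero] at this
    exact this.symm
  · rintro rfl; exact coeff_zero S

lemma d_zero' (hd_add : ∀ a b : K, d (a + b) = d a + d b) : d 0 = 0 := by
  have := hd_add 0 0
  simp at this
  exact this

/-- scaling: ι a * Psi c -/
lemma iota_mul_Psi (a : K) (c : ℕ →₀ K) :
    S.ι a * Psi S c = Psi S (c.mapRange (a * ·) (mul_zero a)) := by
  rw [Psi, Psi, Finsupp.sum_mapRange_index (fun i => by simp)]
  rw [Finsupp.sum, Finsupp.sum, Finset.mul_sum]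
  refine Finset.sum_congr rfl (fun i _ => ?_)
  rw [← mul_assoc, ← map_mul]

lemma dop_mul_Psi (hd_add : ∀ a b : K, d (a + b) = d a + d b) (c : ℕ →₀ K) :
    S.dop * Psi S c
      = Psi S (c.mapDomain (· + 1) + c.mapRange d (d_zero' hd_add)) := by
  rw [Psi_add, Psi, Psi, Psi]
  rw [Finsupp.sum_mapRange_index (fun i => by simp)]
  rw [Finsupp.sum_mapDomain_index (fun b => by simp) (fun b m₁ m₂ => by rw [map_add, add_mul])]
  rw [Finsupp.sum, Finsupp.sum, Finsupp.sum, Finset.mul_sum, ← Finset.sum_add_distrib]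
  refine Finset.sum_congr rfl (fun i _ => ?_)
  rw [← mul_assoc, S.comm, add_mul, mul_assoc, ← pow_succ']


section evalsec

variable {K : Type} [Field K] {d : K → K} {R : Type} [Ring R] (S : DiffOpRing K d R)

lemma eval_Psi (c : ℕ →₀ K) (f : K) :
    S.eval (Psi S c) f = c.sum fun i a => a * d^[i] f := by
  rw [DiffOpRing.eval, coeff_Psi]

lemma eval_add_left (r s : R) (f : K) :
    S.eval (r + s) f = S.eval r f + S.eval s f := by
  rw [DiffOpRing.eval, DiffOpRing.eval, DiffOpRing.eval, coeff_add]
  exact Finsupp.sum_add_index' (fun i => by simp) (fun i b₁ b₂ => by rw [add_mul])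

lemma eval_zero_left (f : K) : S.eval 0 f = 0 := by
  rw [DiffOpRing.eval, coeff_zero, Finsupp.sum_zero_index]

lemma eval_neg_left (r : R) (f : K) : S.eval (-r) f = - S.eval r f := by
  have := eval_add_left S r (-r) f
  rw [add_neg_cancel, eval_zero_left] at this
  rw [eq_neg_iff_add_eq_zero, add_comm]
  exact this.symm

lemma eval_sub_left (r s : R) (f : K) : S.eval (r - s) f = S.eval r f - S.eval s f := by
  rw [sub_eq_add_neg, eval_add_left, eval_neg_left, sub_eq_add_neg]

lemma d_iter_zero (hd_add : ∀ a b : K, d (a + b) = d a + d b) (i : ℕ) : d^[i] (0 : K) = 0 := by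
  induction i with
  | zero => rfl
  | succ k ih => rw [Function.iterate_succ_apply', ih, d_zero' hd_add]

lemma eval_zero_right (hd_add : ∀ a b : K, d (a + b) = d a + d b) (r : R) : S.eval r 0 = 0 := by
  rw [DiffOpRing.eval]
  rw [Finsupp.sum]
  refine Finset.sum_eq_zero (fun i _ => ?_)
  rw [d_iter_zero hd_add, mul_zero]

lemma d_iter_add (hd_add : ∀ a b : K, d (a + b) = d a + d b) (i : ℕ) (f g : K) :
    d^[i] (f + g) = d^[i] f + d^[i] g := by
  induction i with
  | zero => rfl
  | succ k ih => rw [Function.iterate_succ_apply', Function.iterate_succ_apply',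
      Function.iterate_succ_apply', ih, hd_add]

lemma d_sum (hd_add : ∀ a b : K, d (a + b) = d a + d b) {α : Type*} (s : Finset α) (g : α → K) :
    d (∑ i ∈ s, g i) = ∑ i ∈ s, d (g i) := by
  classical
  induction s using Finset.induction_on with
  | empty => simpa using d_zero' hd_add
  | insert _ _ hni ih => rw [Finset.sum_insert hni, Finset.sum_insert hni, hd_add, ih]

lemma eval_add_right (hd_add : ∀ a b : K, d (a + b) = d a + d b) (r : R) (f g : K) :
    S.eval r (f + g) = S.eval r f + S.eval r g := by
  rw [DiffOpRing.eval, DiffOpRing.eval, DiffOpRing.eval, Finsupp.sum, Finsupp.sum, Finsupp.sum,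
    ← Finset.sum_add_distrib]
  refine Finset.sum_congr rfl (fun i _ => ?_)
  rw [d_iter_add hd_add, mul_add]

lemma eval_sum_right (hd_add : ∀ a b : K, d (a + b) = d a + d b) {α : Type*} (r : R)
    (s : Finset α) (f : α → K) :
    S.eval r (∑ j ∈ s, f j) = ∑ j ∈ s, S.eval r (f j) := by
  classical
  induction s using Finset.induction_on with
  | empty => simpa using eval_zero_right S hd_add r
  | insert _ _ hni ih =>
    rw [Finset.sum_insert hni, Finset.sum_insert hni, eval_add_right S hd_add, ih]

lemma one_eq_Psi : (1 : R) = Psi S (Finsupp.single 0 1) := by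
  rw [Psi_single]; simp

lemma eval_one (f : K) : S.eval 1 f = f := by
  rw [one_eq_Psi S, eval_Psi, Finsupp.sum_single_index (by simp)]
  simp

lemma eval_iota_mul (a : K) (r : R) (f : K) :
    S.eval (S.ι a * r) f = a * S.eval r f := by
  conv_lhs => rw [← Psi_coeff S r, iota_mul_Psi, eval_Psi]
  rw [DiffOpRing.eval, Finsupp.sum_mapRange_index (fun i => by simp), Finsupp.sum, Finsupp.sum,
    Finset.mul_sum]
  refine Finset.sum_congr rfl (fun i _ => ?_)
  rw [mul_assoc]

lemma eval_dop_mul (hd_add : ∀ a b : K, d (a + b) = d a + d b)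
    (hd_mul : ∀ a b : K, d (a * b) = a * d b + d a * b) (r : R) (f : K) :
    S.eval (S.dop * r) f = d (S.eval r f) := by
  conv_lhs => rw [← Psi_coeff S r, dop_mul_Psi S hd_add, eval_Psi]
  rw [Finsupp.sum_add_index' (fun i => by simp) (fun i b₁ b₂ => by rw [add_mul])]
  rw [Finsupp.sum_mapRange_index (fun i => by simp)]
  rw [Finsupp.sum_mapDomain_index (fun b => by simp) (fun b m₁ m₂ => by rw [add_mul])]
  rw [DiffOpRing.eval]
  rw [Finsupp.sum, Finsupp.sum, Finsupp.sum]
  rw [d_sum hd_add, ← Finset.sum_add_distrib]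
  refine Finset.sum_congr rfl (fun i _ => ?_)
  rw [hd_mul, Function.iterate_succ_apply']

lemma eval_single_mul (hd_add : ∀ a b : K, d (a + b) = d a + d b)
    (hd_mul : ∀ a b : K, d (a * b) = a * d b + d a * b) (i : ℕ) (a : K) (s : R) (f : K) :
    S.eval (Psi S (Finsupp.single i a) * s) f = a * d^[i] (S.eval s f) := by
  induction i generalizing s with
  | zero =>
    rw [Psi_single, pow_zero, mul_one, eval_iota_mul]
    rfl
  | succ k ih =>
    have h1 : Psi S (Finsupp.single (k+1) a) * s = Psi S (Finsupp.single k a) * (S.dop * s) := by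
      rw [Psi_single, Psi_single, pow_succ, mul_assoc, mul_assoc, mul_assoc]
    rw [h1, ih (S.dop * s), eval_dop_mul S hd_add hd_mul, Function.iterate_succ_apply]

lemma eval_mul (hd_add : ∀ a b : K, d (a + b) = d a + d b)
    (hd_mul : ∀ a b : K, d (a * b) = a * d b + d a * b) (r s : R) (f : K) :
    S.eval (r * s) f = S.eval r (S.eval s f) := by
  have key : ∀ c : ℕ →₀ K, S.eval (Psi S c * s) f = S.eval (Psi S c) (S.eval s f) := by
    intro c
    induction c using Finsupp.induction with
    | zero => rw [Psi_zero, zero_mul, eval_zero_left, eval_zero_left]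
    | single_add i a c hni ha ih =>
      rw [Psi_add, add_mul, eval_add_left, eval_add_left, ih,
        eval_single_mul S hd_add hd_mul, eval_Psi, eval_Psi]
      congr 1
      rw [Finsupp.sum_single_index (by simp)]
  conv_lhs => rw [← Psi_coeff S r]
  conv_rhs => rw [← Psi_coeff S r]
  exact key _

end evalsec

section adjsec

variable {K : Type} [Field K] {d : K → K} {R : Type} [Ring R] (S : DiffOpRing K d R)

noncomputable def adjF (c : ℕ →₀ K) : R := c.sum fun i a => (-S.dop) ^ i * S.ι a

lemma adj_def' (r : R) : S.adj r = adjF S (S.coeff r) := rfl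

lemma adj_Psi (c : ℕ →₀ K) : S.adj (Psi S c) = adjF S c := by
  rw [adj_def', coeff_Psi]

lemma adjF_add (c₁ c₂ : ℕ →₀ K) : adjF S (c₁ + c₂) = adjF S c₁ + adjF S c₂ :=
  Finsupp.sum_add_index' (fun i => by simp) (fun i b₁ b₂ => by rw [map_add, mul_add])

lemma adj_add (r s : R) : S.adj (r + s) = S.adj r + S.adj s := by
  rw [adj_def', adj_def', adj_def', coeff_add, adjF_add]

lemma adj_zero : S.adj 0 = 0 := by
  rw [adj_def', coeff_zero]
  exact Finsupp.sum_zero_index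

lemma adjF_single (i : ℕ) (a : K) : adjF S (Finsupp.single i a) = (-S.dop) ^ i * S.ι a :=
  Finsupp.sum_single_index (by simp)

lemma adj_one : S.adj (1 : R) = 1 := by
  conv_lhs => rw [one_eq_Psi S]
  rw [adj_Psi, adjF_single]
  simp

lemma adj_sum {α : Type*} (s : Finset α) (f : α → R) :
    S.adj (∑ j ∈ s, f j) = ∑ j ∈ s, S.adj (f j) := by
  classical
  induction s using Finset.induction_on with
  | empty => simpa using adj_zero S
  | insert _ _ hni ih => rw [Finset.sum_insert hni, Finset.sum_insert hni, adj_add, ih]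

lemma adj_iota_mul (hd_add : ∀ a b : K, d (a + b) = d a + d b) (a : K) (r : R) :
    S.adj (S.ι a * r) = S.adj r * S.ι a := by
  conv_lhs => rw [← Psi_coeff S r, iota_mul_Psi, adj_Psi]
  rw [adj_def', adjF]
  rw [Finsupp.sum_mapRange_index (fun i => by simp)]
  rw [adjF, Finsupp.sum, Finsupp.sum, Finset.sum_mul]
  refine Finset.sum_congr rfl (fun i _ => ?_)
  rw [mul_assoc, ← map_mul, mul_comm a _]

lemma adj_dop_mul (hd_add : ∀ a b : K, d (a + b) = d a + d b) (r : R) :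
    S.adj (S.dop * r) = S.adj r * (-S.dop) := by
  conv_lhs => rw [← Psi_coeff S r, dop_mul_Psi S hd_add, adj_Psi, adjF_add]
  rw [adjF, adjF]
  rw [Finsupp.sum_mapRange_index (fun i => by simp)]
  rw [Finsupp.sum_mapDomain_index (fun b => by simp) (fun b m₁ m₂ => by rw [map_add, mul_add])]
  rw [adj_def', adjF, Finsupp.sum, Finsupp.sum, Finsupp.sum, Finset.sum_mul,
    ← Finset.sum_add_distrib]
  refine Finset.sum_congr rfl (fun i _ => ?_)
  have hcomm : S.ι ((S.coeff r) i) * (-S.dop) = (-S.dop) * S.ι ((S.coeff r) i)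
      + S.ι (d ((S.coeff r) i)) := by
    have hc := S.comm ((S.coeff r) i)
    rw [mul_neg, neg_mul, hc, neg_add]
    abel
  rw [mul_assoc, hcomm, mul_add, ← mul_assoc, pow_succ]

lemma adj_single_mul (hd_add : ∀ a b : K, d (a + b) = d a + d b) (i : ℕ) (a : K) (s : R) :
    S.adj (Psi S (Finsupp.single i a) * s) = S.adj s * ((-S.dop) ^ i * S.ι a) := by
  induction i generalizing s with
  | zero =>
    rw [Psi_single, pow_zero, pow_zero, mul_one, one_mul, adj_iota_mul S hd_add]
  | succ k ih =>
    have h1 : Psi S (Finsupp.single (k+1) a) * s = Psi S (Finsupp.single k a) * (S.dop * s) := by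
      rw [Psi_single, Psi_single, pow_succ, mul_assoc, mul_assoc, mul_assoc]
    rw [h1, ih (S.dop * s), adj_dop_mul S hd_add, pow_succ', mul_assoc, mul_assoc]

lemma adj_mul (hd_add : ∀ a b : K, d (a + b) = d a + d b) (r s : R) :
    S.adj (r * s) = S.adj s * S.adj r := by
  have key : ∀ c : ℕ →₀ K, S.adj (Psi S c * s) = S.adj s * S.adj (Psi S c) := by
    intro c
    induction c using Finsupp.induction with
    | zero => rw [Psi_zero, zero_mul, adj_zero, mul_zero]
    | single_add i a c hni ha ih =>
      rw [Psi_add, add_mul, adj_add, adj_add, ih, adj_single_mul S hd_add, adj_Psi, adj_Psi,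
        mul_add, adjF_single]
  conv_lhs => rw [← Psi_coeff S r]
  conv_rhs => rw [← Psi_coeff S r]
  exact key _

end adjsec

section degsec

variable {K : Type} [Field K] {d : K → K} {R : Type} [Ring R] (S : DiffOpRing K d R)

noncomputable def deg (r : R) : ℕ := (S.coeff r).support.sup id

noncomputable def lc (r : R) : K := S.coeff r (deg S r)

lemma deg_mem (r : R) (hr : r ≠ 0) : deg S r ∈ (S.coeff r).support := by
  have hne : (S.coeff r).support.Nonempty := by
    rw [Finsupp.support_nonempty_iff]
    intro h
    exact hr ((coeff_eq_zero_iff S r).mp h)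
  have h1 : (S.coeff r).support.max' hne = (S.coeff r).support.sup id := by
    rw [Finset.max', Finset.sup'_eq_sup]
  have := Finset.max'_mem _ hne
  rw [h1] at this
  exact this

lemma lc_ne_zero (r : R) (hr : r ≠ 0) : lc S r ≠ 0 := by
  have := deg_mem S r hr
  rwa [Finsupp.mem_support_iff] at this

lemma coeff_eq_zero_of_deg_lt {r : R} {i : ℕ} (h : deg S r < i) : S.coeff r i = 0 := by
  by_contra hne
  have hmem : i ∈ (S.coeff r).support := Finsupp.mem_support_iff.mpr hne
  have hle : i ≤ deg S r := Finset.le_sup (f := id) hmem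
  omega

lemma deg_eq_of {r : R} {m : ℕ} (h1 : S.coeff r m ≠ 0) (h2 : ∀ i, m < i → S.coeff r i = 0) :
    deg S r = m := by
  have hmem : m ∈ (S.coeff r).support := Finsupp.mem_support_iff.mpr h1
  have hle : deg S r ≤ m := by
    refine Finset.sup_le (fun i hi => ?_)
    show i ≤ m
    by_contra hc
    exact (Finsupp.mem_support_iff.mp hi) (h2 i (by omega))
  have hge : m ≤ deg S r := Finset.le_sup (f := id) hmem
  exact le_antisymm hle hge

lemma ne_zero_of_coeff {r : R} {i : ℕ} (h : S.coeff r i ≠ 0) : r ≠ 0 := by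
  intro hr
  rw [hr, coeff_zero] at h
  exact h rfl

lemma coeff_iota_mul (c : K) (r : R) :
    S.coeff (S.ι c * r) = (S.coeff r).mapRange (c * ·) (mul_zero c) := by
  conv_lhs => rw [← Psi_coeff S r, iota_mul_Psi, coeff_Psi]

lemma coeff_dop_mul (hd_add : ∀ a b : K, d (a + b) = d a + d b) (r : R) :
    S.coeff (S.dop * r)
      = (S.coeff r).mapDomain (· + 1) + (S.coeff r).mapRange d (d_zero' hd_add) := by
  conv_lhs => rw [← Psi_coeff S r, dop_mul_Psi S hd_add, coeff_Psi]

lemma mapDomain_succ_apply (c : ℕ →₀ K) (i : ℕ) :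
    (c.mapDomain (· + 1)) (i + 1) = c i :=
  Finsupp.mapDomain_apply (fun x y h => by omega) c i

lemma mapDomain_succ_zero (c : ℕ →₀ K) : (c.mapDomain (· + 1)) 0 = 0 := by
  rw [Finsupp.mapDomain_notin_range]
  rintro ⟨x, hx⟩
  exact Nat.succ_ne_zero x hx

lemma coeff_dop_mul_succ (hd_add : ∀ a b : K, d (a + b) = d a + d b) (r : R) (i : ℕ) :
    S.coeff (S.dop * r) (i + 1) = S.coeff r i + d (S.coeff r (i + 1)) := by
  rw [coeff_dop_mul S hd_add, Finsupp.add_apply, mapDomain_succ_apply, Finsupp.mapRange_apply]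

lemma dop_mul_facts (hd_add : ∀ a b : K, d (a + b) = d a + d b) (r : R) (hr : r ≠ 0) :
    S.dop * r ≠ 0 ∧ deg S (S.dop * r) = deg S r + 1 ∧ lc S (S.dop * r) = lc S r := by
  have htop : S.coeff (S.dop * r) (deg S r + 1) = lc S r := by
    rw [coeff_dop_mul_succ S hd_add,
      show S.coeff r (deg S r + 1) = 0 from coeff_eq_zero_of_deg_lt S (by omega),
      d_zero' hd_add, add_zero]
    rfl
  have hzero : ∀ i, deg S r + 1 < i → S.coeff (S.dop * r) i = 0 := by
    intro i hi
    obtain ⟨j, rfl⟩ : ∃ j, i = j + 1 := ⟨i - 1, by omega⟩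
    rw [coeff_dop_mul_succ S hd_add,
      show S.coeff r j = 0 from coeff_eq_zero_of_deg_lt S (by omega),
      show S.coeff r (j + 1) = 0 from coeff_eq_zero_of_deg_lt S (by omega),
      d_zero' hd_add, add_zero]
  have hne : S.dop * r ≠ 0 := by
    apply ne_zero_of_coeff S (i := deg S r + 1)
    rw [htop]
    exact lc_ne_zero S r hr
  have hdeg : deg S (S.dop * r) = deg S r + 1 :=
    deg_eq_of S (by rw [htop]; exact lc_ne_zero S r hr) hzero
  exact ⟨hne, hdeg, by rw [lc, hdeg, htop]⟩

lemma dop_pow_mul_facts (hd_add : ∀ a b : K, d (a + b) = d a + d b) (k : ℕ) (r : R)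
    (hr : r ≠ 0) :
    S.dop ^ k * r ≠ 0 ∧ deg S (S.dop ^ k * r) = k + deg S r
      ∧ lc S (S.dop ^ k * r) = lc S r := by
  induction k with
  | zero =>
    refine ⟨by simpa using hr, by simp, by simp⟩
  | succ m ih =>
    have h1 : S.dop ^ (m + 1) * r = S.dop * (S.dop ^ m * r) := by
      rw [pow_succ', mul_assoc]
    obtain ⟨ih1, ih2, ih3⟩ := ih
    obtain ⟨f1, f2, f3⟩ := dop_mul_facts S hd_add _ ih1
    refine ⟨by rwa [h1], ?_, ?_⟩
    · rw [h1, f2, ih2]; omega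
    · rw [h1, f3, ih3]

lemma iota_mul_facts (c : K) (hc : c ≠ 0) (r : R) (hr : r ≠ 0) :
    S.ι c * r ≠ 0 ∧ deg S (S.ι c * r) = deg S r ∧ lc S (S.ι c * r) = c * lc S r := by
  have happ : ∀ i, S.coeff (S.ι c * r) i = c * S.coeff r i := by
    intro i
    rw [coeff_iota_mul, Finsupp.mapRange_apply]
  have htop : S.coeff (S.ι c * r) (deg S r) = c * lc S r := happ _
  have hne : S.ι c * r ≠ 0 := by
    apply ne_zero_of_coeff S (i := deg S r)
    rw [htop]
    exact mul_ne_zero hc (lc_ne_zero S r hr)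
  have hdeg : deg S (S.ι c * r) = deg S r := by
    refine deg_eq_of S (by rw [htop]; exact mul_ne_zero hc (lc_ne_zero S r hr)) ?_
    intro i hi
    rw [happ, coeff_eq_zero_of_deg_lt S hi, mul_zero]
  exact ⟨hne, hdeg, by rw [lc, hdeg, htop]⟩

lemma monomial_mul_facts (hd_add : ∀ a b : K, d (a + b) = d a + d b) (k : ℕ) (c : K)
    (hc : c ≠ 0) (r : R) (hr : r ≠ 0) :
    Psi S (Finsupp.single k c) * r ≠ 0 ∧ deg S (Psi S (Finsupp.single k c) * r) = k + deg S r
      ∧ lc S (Psi S (Finsupp.single k c) * r) = c * lc S r := by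
  have h1 : Psi S (Finsupp.single k c) * r = S.ι c * (S.dop ^ k * r) := by
    rw [Psi_single, mul_assoc]
  obtain ⟨p1, p2, p3⟩ := dop_pow_mul_facts S hd_add k r hr
  obtain ⟨q1, q2, q3⟩ := iota_mul_facts S c hc _ p1
  exact ⟨by rwa [h1], by rw [h1, q2, p2], by rw [h1, q3, p3]⟩

lemma eq_iota_of_deg_zero (g : R) (h : deg S g = 0) : g = S.ι (S.coeff g 0) := by
  have hc : S.coeff g = Finsupp.single 0 (S.coeff g 0) := by
    ext i
    rcases Nat.eq_zero_or_pos i with rfl | hi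
    · simp
    · rw [coeff_eq_zero_of_deg_lt S (by omega), Finsupp.single_apply_eq_zero.mpr]
      intro hi0
      omega
  conv_lhs => rw [← Psi_coeff S g, hc, Psi_single]
  simp

lemma division (hd_add : ∀ a b : K, d (a + b) = d a + d b) (b : R) (hb : b ≠ 0) (a : R) :
    ∃ q ρ : R, a = q * b + ρ ∧ (ρ = 0 ∨ deg S ρ < deg S b) := by
  have main : ∀ N : ℕ, ∀ a : R, deg S a < N →
      ∃ q ρ : R, a = q * b + ρ ∧ (ρ = 0 ∨ deg S ρ < deg S b) := by
    intro N
    induction N with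
    | zero => intro a ha; omega
    | succ N ih =>
      intro a ha
      by_cases h0 : a = 0
      · exact ⟨0, 0, by simp [h0], Or.inl rfl⟩
      by_cases hlt : deg S a < deg S b
      · exact ⟨0, a, by simp, Or.inr hlt⟩
      push_neg at hlt
      set c : K := lc S a * (lc S b)⁻¹ with hcdef
      have hcne : c ≠ 0 := by
        apply mul_ne_zero (lc_ne_zero S a h0)
        exact inv_ne_zero (lc_ne_zero S b hb)
      set q1 : R := Psi S (Finsupp.single (deg S a - deg S b) c) with hq1def
      obtain ⟨m1, m2, m3⟩ := monomial_mul_facts S hd_add (deg S a - deg S b) c hcne b hb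
      have hdq : deg S (q1 * b) = deg S a := by rw [m2]; omega
      have hlq : lc S (q1 * b) = lc S a := by
        rw [m3, hcdef, mul_assoc, inv_mul_cancel₀ (lc_ne_zero S b hb), mul_one]
      set a' : R := a - q1 * b with ha'def
      have hkey : ∀ i, deg S a ≤ i → S.coeff a' i = 0 := by
        intro i hi
        rw [ha'def, coeff_sub, Finsupp.sub_apply]
        rcases Nat.lt_or_ge (deg S a) i with h | h
        · rw [coeff_eq_zero_of_deg_lt S h, coeff_eq_zero_of_deg_lt S (by omega), sub_zero]
        · have hieq : i = deg S a := by omega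
          subst hieq
          rw [← lc, ← hdq, ← lc, hlq, sub_self]
      by_cases h0' : a' = 0
      · refine ⟨q1, 0, ?_, Or.inl rfl⟩
        rw [add_zero]
        exact sub_eq_zero.mp h0'
      · have hda' : deg S a' < deg S a := by
          by_contra hc
          push_neg at hc
          exact (lc_ne_zero S a' h0') (hkey _ hc)
        obtain ⟨q, ρ, hqe, hρ⟩ := ih a' (by omega)
        refine ⟨q + q1, ρ, ?_, hρ⟩
        have h3 : a = a' + q1 * b := by rw [ha'def]; abel
        rw [h3, hqe, add_mul]
        abel
  exact main (deg S a + 1) a (Nat.lt_succ_self _)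

end degsec

section kersec

variable {K : Type} [Field K] {d : K → K} {R : Type} [Ring R] (S : DiffOpRing K d R)

lemma eval_eq_range_sum (g : R) (u : K) :
    S.eval g u = ∑ i ∈ Finset.range (deg S g + 1), S.coeff g i * d^[i] u := by
  rw [DiffOpRing.eval]
  apply Finsupp.sum_of_support_subset
  · intro i hi
    rw [Finset.mem_range]
    have h2 : i ≤ deg S g := Finset.le_sup (f := id) hi
    omega
  · intro i _
    rw [zero_mul]

lemma kernel_exists
    (hlc : ∀ m : ℕ, 1 ≤ m → ∀ a : Fin (m + 1) → K, a (Fin.last m) ≠ 0 →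
      ∃ u : K, u ≠ 0 ∧ (∑ i, a i * d^[(i : ℕ)] u) = 0)
    (g : R) (hg : g ≠ 0) (hdeg : 1 ≤ deg S g) :
    ∃ u : K, u ≠ 0 ∧ S.eval g u = 0 := by
  obtain ⟨u, hu, hsum⟩ := hlc (deg S g) hdeg (fun i => S.coeff g i)
    (by simp only [Fin.val_last]; exact lc_ne_zero S g hg)
  refine ⟨u, hu, ?_⟩
  rw [eval_eq_range_sum,
    ← Fin.sum_univ_eq_sum_range (fun i => S.coeff g i * d^[i] u) (deg S g + 1)]
  exact hsum

end kersec

section noethsec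

lemma noeth {K : Type} [Field K] {d : K → K} {R : Type} [Ring R] (S : DiffOpRing K d R) (hd_add : ∀ a b : K, d (a + b) = d a + d b) : IsNoetherianRing R := by
  classical
  rw [isNoetherianRing_iff_ideal_fg]
  intro I
  by_cases hI : I = ⊥
  · subst hI
    exact ⟨∅, by simp⟩
  · obtain ⟨g₀, hg₀I, hg₀⟩ := Submodule.exists_mem_ne_zero_of_ne_bot hI
    have hP : ∃ k : ℕ, ∃ g : R, g ∈ I ∧ g ≠ 0 ∧ deg S g = k := ⟨deg S g₀, g₀, hg₀I, hg₀, rfl⟩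
    obtain ⟨g, hgI, hg, hgdeg⟩ := Nat.find_spec hP
    have hmin : ∀ f : R, f ∈ I → f ≠ 0 → deg S g ≤ deg S f := by
      intro f hfI hf
      rw [hgdeg]
      exact Nat.find_le ⟨f, hfI, hf, rfl⟩
    refine ⟨{g}, le_antisymm ?_ ?_⟩
    · rw [Ideal.span_le]
      simpa using hgI
    · intro f hfI
      simp only [Finset.coe_singleton]
      rw [show (Ideal.span {g} : Ideal R) = Submodule.span R {g} from rfl,
        Submodule.mem_span_singleton]
      obtain ⟨q, ρ, hfe, hρ⟩ := division S hd_add g hg f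
      have hρI : ρ ∈ I := by
        have : ρ = f - q * g := by rw [hfe]; abel
        rw [this]
        exact Submodule.sub_mem I hfI (Submodule.smul_mem I q hgI)
      rcases hρ with h0 | hlt
      · exact ⟨q, by rw [smul_eq_mul, hfe, h0, add_zero]⟩
      · by_cases hz : ρ = 0
        · exact ⟨q, by rw [smul_eq_mul, hfe, hz, add_zero]⟩
        · have := hmin ρ hρI hz
          omega

lemma vecMul_smul' {R : Type} [Ring R] {ι κ : Type} [Fintype ι] (r : R) (x : ι → R) (M : Matrix ι κ R) :
    Matrix.vecMul (r • x) M = r • Matrix.vecMul x M := by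
  funext j
  simp only [Matrix.vecMul, dotProduct, Pi.smul_apply, smul_eq_mul, Finset.mul_sum,
    mul_assoc]

lemma row_cancel {K : Type} [Field K] {d : K → K} {R : Type} [Ring R] (S : DiffOpRing K d R) (hd_add : ∀ a b : K, d (a + b) = d a + d b)
    {ι : Type} [Fintype ι] [DecidableEq ι]
    (W L : Matrix ι ι R) (hLW : L * W = 1) (y : ι → R)
    (hy : Matrix.vecMul y W = 0) : y = 0 := by
  haveI := noeth S hd_add
  let φ : (ι → R) →ₗ[R] (ι → R) :=
    { toFun := fun x => Matrix.vecMul x W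
      map_add' := fun x y => by
        funext j
        simp only [Matrix.vecMul, dotProduct, Pi.add_apply, add_mul,
          Finset.sum_add_distrib]
      map_smul' := fun r x => vecMul_smul' r x W }
  have hsurj : Function.Surjective φ := by
    intro x
    refine ⟨Matrix.vecMul x L, ?_⟩
    show Matrix.vecMul (Matrix.vecMul x L) W = x
    rw [Matrix.vecMul_vecMul, hLW, Matrix.vecMul_one]
  have hinj := IsNoetherian.injective_of_surjective_endomorphism φ hsurj
  apply hinj
  show Matrix.vecMul y W = Matrix.vecMul 0 W
  rw [hy, Matrix.zero_vecMul]

end noethsec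


section actsec

variable {K : Type} [Field K] {d : K → K} {R : Type} [Ring R] (S : DiffOpRing K d R)

lemma eval_sum_left {α : Type*} (s : Finset α) (r : α → R) (f : K) :
    S.eval (∑ j ∈ s, r j) f = ∑ j ∈ s, S.eval (r j) f := by
  classical
  induction s using Finset.induction_on with
  | empty => simpa using eval_zero_left S f
  | insert _ _ hni ih => rw [Finset.sum_insert hni, Finset.sum_insert hni, eval_add_left, ih]

noncomputable def act {α β : Type} [Fintype β] (M : Matrix α β R) (v : β → K) : α → K :=
  fun i => ∑ j, S.eval (M i j) (v j)

lemma act_mul (hd_add : ∀ a b : K, d (a + b) = d a + d b)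
    (hd_mul : ∀ a b : K, d (a * b) = a * d b + d a * b)
    {α β γ : Type} [Fintype β] [Fintype γ] (M : Matrix α β R) (N : Matrix β γ R) (v : γ → K) :
    act S (M * N) v = act S M (act S N v) := by
  funext i
  show ∑ j, S.eval ((M * N) i j) (v j) = ∑ k, S.eval (M i k) (act S N v k)
  calc ∑ j, S.eval ((M * N) i j) (v j)
      = ∑ j, ∑ k, S.eval (M i k * N k j) (v j) := by
        refine Finset.sum_congr rfl (fun j _ => ?_)
        rw [Matrix.mul_apply, eval_sum_left]
    _ = ∑ k, ∑ j, S.eval (M i k) (S.eval (N k j) (v j)) := by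
        rw [Finset.sum_comm]
        refine Finset.sum_congr rfl (fun k _ => Finset.sum_congr rfl (fun j _ => ?_))
        rw [eval_mul S hd_add hd_mul]
    _ = ∑ k, S.eval (M i k) (act S N v k) := by
        refine Finset.sum_congr rfl (fun k _ => ?_)
        rw [act, ← eval_sum_right S hd_add]

lemma act_one {α : Type} [Fintype α] [DecidableEq α] (v : α → K) :
    act S (1 : Matrix α α R) v = v := by
  funext i
  show ∑ j, S.eval ((1 : Matrix α α R) i j) (v j) = v i
  rw [Finset.sum_eq_single i]
  · rw [Matrix.one_apply_eq, eval_one]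
  · intro j _ hj
    rw [Matrix.one_apply_ne (Ne.symm hj), eval_zero_left]
  · intro h
    exact absurd (Finset.mem_univ i) h

lemma act_sub {α β : Type} [Fintype β] (M N : Matrix α β R) (v : β → K) :
    act S (M - N) v = act S M v - act S N v := by
  funext i
  show ∑ j, S.eval ((M - N) i j) (v j) = (∑ j, S.eval (M i j) (v j)) - ∑ j, S.eval (N i j) (v j)
  rw [← Finset.sum_sub_distrib]
  exact Finset.sum_congr rfl (fun j _ => by rw [Matrix.sub_apply, eval_sub_left])

lemma act_zero_vec (hd_add : ∀ a b : K, d (a + b) = d a + d b)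
    {α β : Type} [Fintype β] (M : Matrix α β R) :
    act S M (0 : β → K) = 0 := by
  funext i
  exact Finset.sum_eq_zero (fun j _ => eval_zero_right S hd_add _)

end actsec

section spansec

variable {K : Type} [Field K] {d : K → K} {R : Type} [Ring R] (S : DiffOpRing K d R)

lemma spanning (hd_add : ∀ a b : K, d (a + b) = d a + d b)
    (hd_mul : ∀ a b : K, d (a * b) = a * d b + d a * b)
    (hlc : ∀ m : ℕ, 1 ≤ m → ∀ a : Fin (m + 1) → K, a (Fin.last m) ≠ 0 →
      ∃ u : K, u ≠ 0 ∧ (∑ i, a i * d^[(i : ℕ)] u) = 0)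
    {ι : Type} [Fintype ι] [DecidableEq ι] :
    ∀ (n : ℕ) (M : Matrix ι (Fin n) R),
      (∀ v : Fin n → K, (∀ i, ∑ j, S.eval (M i j) (v j) = 0) → v = 0) →
      ∃ X : Matrix (Fin n) ι R, X * M = 1 := by
  classical
  intro n
  induction n with
  | zero =>
    intro M _
    refine ⟨fun j _ => 0, ?_⟩
    ext j j'
    exact j.elim0
  | succ n ih =>
    intro M hke
    set T : (ι → R) → R := fun x => ∑ i, x i * M i (Fin.last n) with hT
    have hTsingle : ∀ i₀ : ι, T (Pi.single i₀ 1) = M i₀ (Fin.last n) := by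
      intro i₀
      rw [hT]
      simp only
      rw [Finset.sum_eq_single i₀]
      · rw [Pi.single_eq_same, one_mul]
      · intro b _ hb
        rw [Pi.single_eq_of_ne hb, zero_mul]
      · intro h; exact absurd (Finset.mem_univ i₀) h
    by_cases hz : ∀ x : ι → R, T x = 0
    · exfalso
      set v : Fin (n + 1) → K := fun j' => if j' = Fin.last n then (1 : K) else 0 with hv
      have hvz : ∀ i, ∑ j, S.eval (M i j) (v j) = 0 := by
        intro i
        refine Finset.sum_eq_zero (fun j _ => ?_)
        by_cases hj : j = Fin.last n
        · subst hj
          have h1 : M i (Fin.last n) = 0 := by rw [← hTsingle i]; exact hz _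
          rw [h1, eval_zero_left]
        · have h2 : v j = 0 := by rw [hv]; simp [hj]
          rw [h2, eval_zero_right S hd_add]
      have hvv := congrFun (hke v hvz) (Fin.last n)
      rw [hv] at hvv
      simp at hvv
    · push_neg at hz
      obtain ⟨x₀, hx₀⟩ := hz
      have hPex : ∃ k : ℕ, ∃ x : ι → R, T x ≠ 0 ∧ deg S (T x) = k := ⟨_, x₀, hx₀, rfl⟩
      obtain ⟨c0, hc0ne, hc0deg⟩ := Nat.find_spec hPex
      have hminT : ∀ x : ι → R, T x ≠ 0 → deg S (T c0) ≤ deg S (T x) := by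
        intro x hx
        rw [hc0deg]
        exact Nat.find_le ⟨x, hx, rfl⟩
      have hTsub : ∀ (x : ι → R) (q : R), T (fun i => x i - q * c0 i) = T x - q * T c0 := by
        intro x q
        rw [hT]
        simp only
        rw [Finset.mul_sum, ← Finset.sum_sub_distrib]
        refine Finset.sum_congr rfl (fun i _ => ?_)
        rw [sub_mul, mul_assoc]
      have hdvd : ∀ x : ι → R, ∃ q : R, T x = q * T c0 := by
        intro x
        obtain ⟨q, ρ, he, hρ⟩ := division S hd_add (T c0) hc0ne (T x)
        refine ⟨q, ?_⟩
        have hρT : ρ = T (fun i => x i - q * c0 i) := by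
          rw [hTsub, he]
          abel
        by_cases hz0 : ρ = 0
        · rw [he, hz0, add_zero]
        · exfalso
          rcases hρ with h0 | hlt
          · exact hz0 h0
          · have hmm := hminT _ (by rw [← hρT]; exact hz0)
            rw [← hρT] at hmm
            omega
      by_cases hdo : 1 ≤ deg S (T c0)
      · exfalso
        obtain ⟨u, hu, hgu⟩ := kernel_exists S hlc (T c0) hc0ne hdo
        set v : Fin (n + 1) → K := fun j' => if j' = Fin.last n then u else 0 with hv
        have hvz : ∀ i, ∑ j, S.eval (M i j) (v j) = 0 := by
          intro i
          refine Finset.sum_eq_zero (fun j _ => ?_)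
          by_cases hj : j = Fin.last n
          · subst hj
            obtain ⟨q, hq⟩ := hdvd (Pi.single i 1)
            rw [hTsingle] at hq
            have hvl : v (Fin.last n) = u := by rw [hv]; simp
            rw [hvl, hq, eval_mul S hd_add hd_mul, hgu, eval_zero_right S hd_add]
          · have h2 : v j = 0 := by rw [hv]; simp [hj]
            rw [h2, eval_zero_right S hd_add]
        have hvv := congrFun (hke v hvz) (Fin.last n)
        rw [hv] at hvv
        simp at hvv
        exact hu hvv
      · have hdeg0 : deg S (T c0) = 0 := by omega
        have hTc0 : T c0 = S.ι (S.coeff (T c0) 0) := eq_iota_of_deg_zero S _ hdeg0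
        have ha : S.coeff (T c0) 0 ≠ 0 := by
          have hl := lc_ne_zero S (T c0) hc0ne
          rwa [lc, hdeg0] at hl
        set a : K := S.coeff (T c0) 0 with hadef
        set c : ι → R := fun i => S.ι a⁻¹ * c0 i with hc
        have hTmulL : ∀ (r : R) (x : ι → R), T (fun i => r * x i) = r * T x := by
          intro r x
          rw [hT]
          simp only
          rw [Finset.mul_sum]
          exact Finset.sum_congr rfl (fun i _ => by rw [mul_assoc])
        have hTc : T c = 1 := by
          rw [hc, hTmulL, hTc0, ← map_mul, inv_mul_cancel₀ ha, map_one]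
        set rv : Fin (n + 1) → R := fun j => ∑ i, c i * M i j with hrv
        have hrvlast : rv (Fin.last n) = 1 := hTc
        set M' : Matrix ι (Fin n) R :=
          fun i j => M i j.castSucc - M i (Fin.last n) * rv j.castSucc with hM'
        have hMsplit : ∀ (i : ι) (j : Fin n),
            M i j.castSucc = M' i j + M i (Fin.last n) * rv j.castSucc := by
          intro i j
          rw [hM']
          simp only
          abel
        have hke' : ∀ v'' : Fin n → K, (∀ i, ∑ j, S.eval (M' i j) (v'' j) = 0) → v'' = 0 := by
          intro v'' hv''
          set ρ0 : K := ∑ j : Fin n, S.eval (rv j.castSucc) (v'' j) with hρ0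
          set v : Fin (n + 1) → K := Fin.snoc v'' (-ρ0) with hvdef
          have hvcast : ∀ j : Fin n, v j.castSucc = v'' j := fun j => Fin.snoc_castSucc _ _ _
          have hvlast : v (Fin.last n) = -ρ0 := Fin.snoc_last _ _
          have hvz : ∀ i, ∑ j, S.eval (M i j) (v j) = 0 := by
            intro i
            rw [Fin.sum_univ_castSucc]
            have hterm : ∀ j : Fin n,
                S.eval (M i j.castSucc) (v j.castSucc)
                  = S.eval (M' i j) (v'' j)
                    + S.eval (M i (Fin.last n) * rv j.castSucc) (v'' j) := by
              intro j
              rw [hvcast, hMsplit i j, eval_add_left]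
            rw [Finset.sum_congr rfl (fun j _ => hterm j), hvlast, Finset.sum_add_distrib,
              hv'' i, zero_add]
            have hsum2 : ∀ j : Fin n, S.eval (M i (Fin.last n) * rv j.castSucc) (v'' j)
                = S.eval (M i (Fin.last n)) (S.eval (rv j.castSucc) (v'' j)) :=
              fun j => eval_mul S hd_add hd_mul _ _ _
            rw [Finset.sum_congr rfl (fun j _ => hsum2 j), ← eval_sum_right S hd_add, ← hρ0,
              ← eval_add_right S hd_add, add_neg_cancel, eval_zero_right S hd_add]
          have hv0 := hke v hvz
          funext j
          have hcj := congrFun hv0 j.castSucc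
          rwa [hvcast] at hcj
        obtain ⟨X'', hX''⟩ := ih M' hke'
        set κ : Fin n → R := fun j => ∑ i, X'' j i * M i (Fin.last n) with hκ
        set Xc : Matrix (Fin n) ι R := fun j i => X'' j i - κ j * c i with hXc
        have hXc_cast : ∀ (j₀ j' : Fin n),
            ∑ i, Xc j₀ i * M i j'.castSucc = (1 : Matrix (Fin n) (Fin n) R) j₀ j' := by
          intro j₀ j'
          have e1 : ∀ i : ι, Xc j₀ i * M i j'.castSucc
              = X'' j₀ i * M' i j' + (X'' j₀ i * M i (Fin.last n)) * rv j'.castSucc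
                - (κ j₀ * c i) * M i j'.castSucc := by
            intro i
            rw [hXc]
            simp only
            rw [sub_mul, hMsplit i j', mul_add, ← mul_assoc]
          rw [Finset.sum_congr rfl (fun i _ => e1 i), Finset.sum_sub_distrib,
            Finset.sum_add_distrib]
          have e2 : ∑ i, (X'' j₀ i * M i (Fin.last n)) * rv j'.castSucc
              = κ j₀ * rv j'.castSucc := by
            rw [hκ]
            simp only
            rw [Finset.sum_mul]
          have e3 : ∑ i, (κ j₀ * c i) * M i j'.castSucc = κ j₀ * rv j'.castSucc := by
            have e3' : ∑ i, (κ j₀ * c i) * M i j'.castSucc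
                = κ j₀ * ∑ i, c i * M i j'.castSucc := by
              rw [Finset.mul_sum]
              exact Finset.sum_congr rfl (fun i _ => by rw [mul_assoc])
            rw [e3', show (∑ i, c i * M i j'.castSucc) = rv j'.castSucc from rfl]
          have e4 : ∑ i, X'' j₀ i * M' i j' = (1 : Matrix (Fin n) (Fin n) R) j₀ j' := by
            rw [← hX'', Matrix.mul_apply]
          rw [e2, e3, e4]
          abel
        have hXc_last : ∀ j₀ : Fin n, ∑ i, Xc j₀ i * M i (Fin.last n) = 0 := by
          intro j₀
          have e1 : ∀ i : ι, Xc j₀ i * M i (Fin.last n)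
              = X'' j₀ i * M i (Fin.last n) - (κ j₀ * c i) * M i (Fin.last n) := by
            intro i
            rw [hXc]
            simp only
            rw [sub_mul]
          rw [Finset.sum_congr rfl (fun i _ => e1 i), Finset.sum_sub_distrib]
          have e3 : ∑ i, (κ j₀ * c i) * M i (Fin.last n) = κ j₀ := by
            have e3' : ∑ i, (κ j₀ * c i) * M i (Fin.last n)
                = κ j₀ * ∑ i, c i * M i (Fin.last n) := by
              rw [Finset.mul_sum]
              exact Finset.sum_congr rfl (fun i _ => by rw [mul_assoc])
            rw [e3', show (∑ i, c i * M i (Fin.last n)) = rv (Fin.last n) from rfl, hrvlast,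
              mul_one]
          have e4 : ∑ i, X'' j₀ i * M i (Fin.last n) = κ j₀ := by rw [hκ]
          rw [e3, e4, sub_self]
        set Xl : ι → R := fun i => c i - ∑ j : Fin n, rv j.castSucc * Xc j i with hXl
        have hXl_eq : ∀ j : Fin (n + 1), ∑ i, Xl i * M i j
            = rv j - ∑ j₀ : Fin n, rv j₀.castSucc * (∑ i, Xc j₀ i * M i j) := by
          intro j
          have e1 : ∀ i : ι, Xl i * M i j
              = c i * M i j - ∑ j₀ : Fin n, (rv j₀.castSucc * Xc j₀ i) * M i j := by
            intro i
            rw [hXl]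
            simp only
            rw [sub_mul, Finset.sum_mul]
          rw [Finset.sum_congr rfl (fun i _ => e1 i), Finset.sum_sub_distrib]
          congr 1
          rw [Finset.sum_comm]
          refine Finset.sum_congr rfl (fun j₀ _ => ?_)
          rw [Finset.mul_sum]
          exact Finset.sum_congr rfl (fun i _ => by rw [mul_assoc])
        set X : Matrix (Fin (n + 1)) ι R :=
          fun j' i => Fin.lastCases (Xl i) (fun j => Xc j i) j' with hX
        have hXapp_cast : ∀ (j₀ : Fin n) (i : ι), X j₀.castSucc i = Xc j₀ i := by
          intro j₀ i
          rw [hX]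
          exact Fin.lastCases_castSucc _
        have hXapp_last : ∀ i : ι, X (Fin.last n) i = Xl i := by
          intro i
          rw [hX]
          exact Fin.lastCases_last
        refine ⟨X, ?_⟩
        ext j' j
        rw [Matrix.mul_apply]
        refine Fin.lastCases ?_ ?_ j'
        · rw [Finset.sum_congr rfl (fun i _ => by rw [hXapp_last i]), hXl_eq]
          refine Fin.lastCases ?_ ?_ j
          · rw [hrvlast]
            have hz0 : ∀ j₀ : Fin n, rv j₀.castSucc * (∑ i, Xc j₀ i * M i (Fin.last n)) = 0 :=
              fun j₀ => by rw [hXc_last j₀, mul_zero]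
            rw [Finset.sum_congr rfl (fun j₀ _ => hz0 j₀), Finset.sum_const_zero, sub_zero,
              Matrix.one_apply_eq]
          · intro j''
            have hz1 : ∀ j₀ : Fin n, rv j₀.castSucc * (∑ i, Xc j₀ i * M i j''.castSucc)
                = rv j₀.castSucc * (1 : Matrix (Fin n) (Fin n) R) j₀ j'' :=
              fun j₀ => by rw [hXc_cast j₀ j'']
            rw [Finset.sum_congr rfl (fun j₀ _ => hz1 j₀)]
            have e5 : ∑ j₀ : Fin n, rv j₀.castSucc * (1 : Matrix (Fin n) (Fin n) R) j₀ j''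
                = rv j''.castSucc := by
              rw [Finset.sum_eq_single j'']
              · rw [Matrix.one_apply_eq, mul_one]
              · intro b _ hb
                rw [Matrix.one_apply_ne hb, mul_zero]
              · intro h; exact absurd (Finset.mem_univ j'') h
            rw [e5, sub_self, Matrix.one_apply_ne]
            exact (Fin.castSucc_lt_last j'').ne'
        · intro j₀
          rw [Finset.sum_congr rfl (fun i _ => by rw [hXapp_cast j₀ i])]
          refine Fin.lastCases ?_ ?_ j
          · rw [hXc_last j₀, Matrix.one_apply_ne]
            exact (Fin.castSucc_lt_last j₀).ne
          · intro j''
            rw [hXc_cast j₀ j'']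
            simp [Matrix.one_apply, Fin.castSucc_inj]

end spansec

end Wk

/-- Let K be a linearly closed differential field and A, B ∈ M_n(K[∂])
with B non-degenerate, satisfying A*B + B*A = 0 and ker A ∩ ker B = 0 in K^n. Then the
subspace L_{A,B} = {(B(P), A(P))} ⊂ K^n ⊕ K^n is maximal isotropic: if G, H ∈ K^n
satisfy A*(H) + B*(G) = 0, then there exists F ∈ K^n with G = A(F) and H = B(F). -/
theorem stmt_17 (K : Type) [Field K] [CharZero K] (d : K → K)
    (hd_add : ∀ a b : K, d (a + b) = d a + d b)
    (hd_mul : ∀ a b : K, d (a * b) = a * d b + d a * b)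
    (hlc : ∀ m : ℕ, 1 ≤ m → ∀ a : Fin (m + 1) → K, a (Fin.last m) ≠ 0 →
      ∃ u : K, u ≠ 0 ∧ (∑ i, a i * d^[(i : ℕ)] u) = 0)
    (R : Type) [Ring R] (S : DiffOpRing K d R)
    (n : ℕ) (A B : Matrix (Fin n) (Fin n) R) (hB : Nondeg B)
    (hskew : adjM S A * B + adjM S B * A = 0)
    (hker : ∀ v : Fin n → K, actM S A v = 0 → actM S B v = 0 → v = 0)
    (G H : Fin n → K)
    (hGH : actM S (adjM S A) H + actM S (adjM S B) G = 0) :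
    ∃ F : Fin n → K, G = actM S A F ∧ H = actM S B F := by
  classical
  set Sm : Matrix (Fin n ⊕ Fin n) (Fin n) R :=
    fun s j => Sum.elim (fun i => A i j) (fun i => B i j) s with hSm
  have hkS : ∀ v : Fin n → K, (∀ s, ∑ j, S.eval (Sm s j) (v j) = 0) → v = 0 := by
    intro v hv
    refine hker v ?_ ?_
    · funext i
      exact hv (Sum.inl i)
    · funext i
      exact hv (Sum.inr i)
  obtain ⟨Xh, hXh⟩ := Wk.spanning S hd_add hd_mul hlc n Sm hkS
  set Nm : Matrix (Fin n) (Fin n ⊕ Fin n) R :=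
    fun i s => Sum.elim (fun j => S.adj (B j i)) (fun j => S.adj (A j i)) s with hNm
  set Θ : Matrix (Fin n ⊕ Fin n) (Fin n) R :=
    fun s j => Sum.elim (fun i => S.adj (Xh j (Sum.inr i))) (fun i => S.adj (Xh j (Sum.inl i))) s
    with hΘ
  have hNS : Nm * Sm = 0 := by
    ext i j
    rw [Matrix.mul_apply, Fintype.sum_sum_type]
    have hsk := congrFun (congrFun hskew i) j
    simp only [Matrix.add_apply, Matrix.mul_apply, Matrix.zero_apply, adjM, Matrix.of_apply]
      at hsk
    show (∑ k, Nm i (Sum.inl k) * Sm (Sum.inl k) j)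
        + (∑ k, Nm i (Sum.inr k) * Sm (Sum.inr k) j) = (0 : Matrix (Fin n) (Fin n) R) i j
    have e1 : ∀ k, Nm i (Sum.inl k) * Sm (Sum.inl k) j = S.adj (B k i) * A k j := fun k => rfl
    have e2 : ∀ k, Nm i (Sum.inr k) * Sm (Sum.inr k) j = S.adj (A k i) * B k j := fun k => rfl
    rw [Finset.sum_congr rfl (fun k _ => e1 k), Finset.sum_congr rfl (fun k _ => e2 k),
      Matrix.zero_apply, add_comm]
    exact hsk
  have hNT : Nm * Θ = 1 := by
    ext i j
    rw [Matrix.mul_apply, Fintype.sum_sum_type]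
    have e1 : ∀ k, Nm i (Sum.inl k) * Θ (Sum.inl k) j
        = S.adj (Xh j (Sum.inr k) * B k i) := by
      intro k
      show S.adj (B k i) * S.adj (Xh j (Sum.inr k)) = _
      rw [Wk.adj_mul S hd_add]
    have e2 : ∀ k, Nm i (Sum.inr k) * Θ (Sum.inr k) j
        = S.adj (Xh j (Sum.inl k) * A k i) := by
      intro k
      show S.adj (A k i) * S.adj (Xh j (Sum.inl k)) = _
      rw [Wk.adj_mul S hd_add]
    rw [Finset.sum_congr rfl (fun k _ => e1 k), Finset.sum_congr rfl (fun k _ => e2 k),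
      ← Wk.adj_sum, ← Wk.adj_sum, ← Wk.adj_add]
    have e3 : ((∑ k, Xh j (Sum.inr k) * B k i) + ∑ k, Xh j (Sum.inl k) * A k i)
        = (Xh * Sm) j i := by
      rw [Matrix.mul_apply, Fintype.sum_sum_type, add_comm]
      rfl
    rw [e3, hXh]
    by_cases hij : j = i
    · subst hij
      rw [Matrix.one_apply_eq, Wk.adj_one]
    · rw [Matrix.one_apply_ne hij, Matrix.one_apply_ne (Ne.symm hij), Wk.adj_zero]
  set W : Matrix (Fin n ⊕ Fin n) (Fin n ⊕ Fin n) R :=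
    fun s t => Sum.elim (fun j => Sm s j) (fun j => Θ s j) t with hW
  set P : Matrix (Fin n) (Fin n ⊕ Fin n) R := Xh - Xh * Θ * Nm with hP
  set L : Matrix (Fin n ⊕ Fin n) (Fin n ⊕ Fin n) R :=
    fun t s => Sum.elim (fun j => P j s) (fun j => Nm j s) t with hL
  have hPS : P * Sm = 1 := by
    rw [hP, Matrix.sub_mul, hXh, Matrix.mul_assoc (Xh * Θ), hNS, Matrix.mul_zero, sub_zero]
  have hPT : P * Θ = 0 := by
    rw [hP, Matrix.sub_mul, Matrix.mul_assoc (Xh * Θ), hNT, Matrix.mul_one, sub_self]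
  have hLW : L * W = 1 := by
    ext t t'
    rw [Matrix.mul_apply]
    cases t with
    | inl j =>
      cases t' with
      | inl j' =>
        have e : ∀ s, L (Sum.inl j) s * W s (Sum.inl j') = P j s * Sm s j' := fun s => by
          cases s <;> rfl
        rw [Finset.sum_congr rfl (fun s _ => e s), ← Matrix.mul_apply, hPS]
        simp [Matrix.one_apply]
      | inr j' =>
        have e : ∀ s, L (Sum.inl j) s * W s (Sum.inr j') = P j s * Θ s j' := fun s => by
          cases s <;> rfl
        rw [Finset.sum_congr rfl (fun s _ => e s), ← Matrix.mul_apply, hPT]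
        simp [Matrix.one_apply]
    | inr j =>
      cases t' with
      | inl j' =>
        have e : ∀ s, L (Sum.inr j) s * W s (Sum.inl j') = Nm j s * Sm s j' := fun s => by
          cases s <;> rfl
        rw [Finset.sum_congr rfl (fun s _ => e s), ← Matrix.mul_apply, hNS]
        simp [Matrix.one_apply]
      | inr j' =>
        have e : ∀ s, L (Sum.inr j) s * W s (Sum.inr j') = Nm j s * Θ s j' := fun s => by
          cases s <;> rfl
        rw [Finset.sum_congr rfl (fun s _ => e s), ← Matrix.mul_apply, hNT]
        simp [Matrix.one_apply]
  set Y0 : Matrix (Fin n ⊕ Fin n) (Fin n ⊕ Fin n) R := 1 - Sm * Xh with hY0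
  set Z : Matrix (Fin n ⊕ Fin n) (Fin n ⊕ Fin n) R := Y0 - Y0 * Θ * Nm with hZdef
  have hY0S : Y0 * Sm = 0 := by
    rw [hY0, Matrix.sub_mul, Matrix.one_mul, Matrix.mul_assoc, hXh, Matrix.mul_one, sub_self]
  have hZS : Z * Sm = 0 := by
    rw [hZdef, Matrix.sub_mul, hY0S, Matrix.mul_assoc (Y0 * Θ), hNS, Matrix.mul_zero, sub_self]
  have hZT : Z * Θ = 0 := by
    rw [hZdef, Matrix.sub_mul, Matrix.mul_assoc (Y0 * Θ), hNT, Matrix.mul_one, sub_self]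
  have hZW : Z * W = 0 := by
    ext s t
    rw [Matrix.mul_apply]
    cases t with
    | inl j =>
      have e : ∀ u, Z s u * W u (Sum.inl j) = Z s u * Sm u j := fun u => rfl
      rw [Finset.sum_congr rfl (fun u _ => e u), ← Matrix.mul_apply, hZS]
      rfl
    | inr j =>
      have e : ∀ u, Z s u * W u (Sum.inr j) = Z s u * Θ u j := fun u => rfl
      rw [Finset.sum_congr rfl (fun u _ => e u), ← Matrix.mul_apply, hZT]
      rfl
  have hZ : Z = 0 := by
    funext s t
    have hrow : Matrix.vecMul (fun u => Z s u) W = 0 := by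
      funext t'
      show ∑ u, Z s u * W u t' = 0
      rw [← Matrix.mul_apply, hZW]
      rfl
    have := congrFun (Wk.row_cancel S hd_add W L hLW (fun u => Z s u) hrow) t
    exact this
  have hKey : (1 : Matrix (Fin n ⊕ Fin n) (Fin n ⊕ Fin n) R) - Sm * Xh = Y0 * Θ * Nm := by
    have : Y0 - Y0 * Θ * Nm = 0 := hZ
    rw [sub_eq_zero] at this
    rw [← hY0]
    exact this
  set vGH : (Fin n ⊕ Fin n) → K := Sum.elim G H with hvGH
  have hNact : Wk.act S Nm vGH = 0 := by
    funext i
    show ∑ s, S.eval (Nm i s) (vGH s) = 0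
    rw [Fintype.sum_sum_type]
    have hGHi := congrFun hGH i
    simp only [Pi.add_apply, Pi.zero_apply] at hGHi
    have e1 : ∀ k, S.eval (Nm i (Sum.inl k)) (vGH (Sum.inl k)) = S.eval (S.adj (B k i)) (G k) :=
      fun k => rfl
    have e2 : ∀ k, S.eval (Nm i (Sum.inr k)) (vGH (Sum.inr k)) = S.eval (S.adj (A k i)) (H k) :=
      fun k => rfl
    rw [Finset.sum_congr rfl (fun k _ => e1 k), Finset.sum_congr rfl (fun k _ => e2 k), add_comm]
    exact hGHi
  set F : Fin n → K := Wk.act S Xh vGH with hF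
  have hfinal : vGH - Wk.act S Sm F = 0 := by
    have h1 : Wk.act S (Sm * Xh) vGH = Wk.act S Sm F := by
      rw [hF]
      exact Wk.act_mul S hd_add hd_mul Sm Xh vGH
    have h2 : vGH - Wk.act S Sm F = Wk.act S (1 - Sm * Xh) vGH := by
      rw [Wk.act_sub, Wk.act_one, h1]
    rw [h2, hKey, Wk.act_mul S hd_add hd_mul (Y0 * Θ) Nm, hNact,
      Wk.act_zero_vec S hd_add]
  refine ⟨F, ?_, ?_⟩
  · funext i
    have h := congrFun hfinal (Sum.inl i)
    simp only [Pi.sub_apply, Pi.zero_apply, sub_eq_zero] at h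
    exact h
  · funext i
    have h := congrFun hfinal (Sum.inr i)
    simp only [Pi.sub_apply, Pi.zero_apply, sub_eq_zero] at h
    exact h
end
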